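/- arXiv:1302.4164 — 2 statements merged into one kernel-verified Lean document; each statement's English description precedes it below -/
import Mathlib

section
/- Let σ be a locally finite Borel measure on ℝ^n and 1 < s < ∞. For nonnegative reals {α_Q} indexed by dyadic cubes Q ⊆ Q_0 (finitely many nonzero), the quantity A_3 = ∫_{Q_0} sup_{x ∈ Q ⊆ Q_0} ((1/σ(Q)) ∑_{Q' ⊆ Q} α_{Q'})^s dσ(x) satisfies A_3 ≤ (s')^s A_1, where A_1 = ∫_{Q_0} (∑_{Q ⊆ Q_0} (α_Q/σ(Q)) 1_Q)^s dσ and s' = s/(s-1). -/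
open MeasureTheory Finset Classical
open scoped ENNReal NNReal

noncomputable section

def dyadicCube (n : ℕ) (i : ℤ) (k : Fin n → ℤ) : Set (Fin n → ℝ) :=
  {x | ∀ j, (k j : ℝ) * 2 ^ (-i) ≤ x j ∧ x j < ((k j : ℝ) + 1) * 2 ^ (-i)}

def IsDyadicCube (n : ℕ) (Q : Set (Fin n → ℝ)) : Prop :=
  ∃ i k, Q = dyadicCube n i k

lemma one_dim_dyadic {i i' a b : ℤ} (h : i' ≤ i) {x y : ℝ}
    (hx1 : (a : ℝ) * 2 ^ (-i) ≤ x) (hx2 : x < ((a : ℝ) + 1) * 2 ^ (-i))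
    (hx1' : (b : ℝ) * 2 ^ (-i') ≤ x) (hx2' : x < ((b : ℝ) + 1) * 2 ^ (-i'))
    (hy1 : (a : ℝ) * 2 ^ (-i) ≤ y) (hy2 : y < ((a : ℝ) + 1) * 2 ^ (-i)) :
    (b : ℝ) * 2 ^ (-i') ≤ y ∧ y < ((b : ℝ) + 1) * 2 ^ (-i') := by
  set M : ℤ := 2 ^ (i - i').toNat with hM
  have hpow : (2:ℝ) ^ (-i) > 0 := zpow_pos (by norm_num) _
  have hMpow : (M : ℝ) * 2 ^ (-i) = 2 ^ (-i') := by
    have h1 : ((M : ℤ) : ℝ) = (2:ℝ) ^ (i - i') := by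
      rw [hM]
      push_cast
      rw [← zpow_natCast]
      congr 1
      omega
    rw [h1, ← zpow_add₀ (by norm_num : (2:ℝ) ≠ 0)]
    congr 1
    ring
  have hba : b * M ≤ a := by
    have h1 : (b : ℝ) * M * 2 ^ (-i) < ((a:ℝ) + 1) * 2 ^ (-i) := by
      calc (b : ℝ) * M * 2 ^ (-i) = (b:ℝ) * 2 ^ (-i') := by rw [mul_assoc, hMpow]
        _ ≤ x := hx1'
        _ < _ := hx2
    have h2 : (b : ℝ) * M < (a:ℝ) + 1 := lt_of_mul_lt_mul_right h1 hpow.le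
    have h3 : ((b * M : ℤ) : ℝ) < ((a + 1 : ℤ) : ℝ) := by push_cast; linarith
    have := Int.cast_lt.mp h3
    omega
  have hab : a + 1 ≤ (b + 1) * M := by
    have h1 : (a : ℝ) * 2 ^ (-i) < ((b:ℝ) + 1) * M * 2 ^ (-i) := by
      calc (a : ℝ) * 2 ^ (-i) ≤ x := hx1
        _ < ((b:ℝ) + 1) * 2 ^ (-i') := hx2'
        _ = ((b:ℝ) + 1) * M * 2 ^ (-i) := by rw [mul_assoc, hMpow]
    have h2 : (a : ℝ) < ((b:ℝ) + 1) * M := lt_of_mul_lt_mul_right h1 hpow.le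
    have h3 : ((a : ℤ) : ℝ) < (((b + 1) * M : ℤ) : ℝ) := by push_cast; linarith
    have := Int.cast_lt.mp h3
    omega
  constructor
  · calc (b : ℝ) * 2 ^ (-i') = (b : ℝ) * M * 2 ^ (-i) := by rw [mul_assoc, hMpow]
      _ ≤ (a : ℝ) * 2 ^ (-i) := by
          have : ((b * M : ℤ) : ℝ) ≤ ((a : ℤ) : ℝ) := Int.cast_le.mpr hba
          push_cast at this
          nlinarith
      _ ≤ y := hy1
  · calc y < ((a:ℝ) + 1) * 2 ^ (-i) := hy2
      _ ≤ ((b:ℝ) + 1) * M * 2 ^ (-i) := by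
          have : (((a + 1) : ℤ) : ℝ) ≤ (((b + 1) * M : ℤ) : ℝ) := Int.cast_le.mpr hab
          push_cast at this
          nlinarith
      _ = ((b:ℝ) + 1) * 2 ^ (-i') := by rw [mul_assoc, hMpow]

lemma dyadic_subset_or_disjoint {n : ℕ} {A B : Set (Fin n → ℝ)}
    (hA : IsDyadicCube n A) (hB : IsDyadicCube n B) :
    A ⊆ B ∨ B ⊆ A ∨ Disjoint A B := by
  obtain ⟨i, k, rfl⟩ := hA
  obtain ⟨i', k', rfl⟩ := hB
  have key : ∀ (i i' : ℤ) (k k' : Fin n → ℤ), i' ≤ i →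
      ¬Disjoint (dyadicCube n i k) (dyadicCube n i' k') →
      dyadicCube n i k ⊆ dyadicCube n i' k' := by
    intro i i' k k' hle hnd
    obtain ⟨x, hxA, hxB⟩ := Set.not_disjoint_iff.mp hnd
    intro y hy j
    exact one_dim_dyadic hle (hxA j).1 (hxA j).2 (hxB j).1 (hxB j).2 (hy j).1 (hy j).2
  rcases le_total i' i with hle | hle
  · by_cases hd : Disjoint (dyadicCube n i k) (dyadicCube n i' k')
    · exact Or.inr (Or.inr hd)
    · exact Or.inl (key i i' k k' hle hd)
  · by_cases hd : Disjoint (dyadicCube n i k) (dyadicCube n i' k')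
    · exact Or.inr (Or.inr hd)
    · exact Or.inr (Or.inl (key i' i k' k hle fun h => hd h.symm))

lemma IsDyadicCube.measurableSet {n : ℕ} {A : Set (Fin n → ℝ)} (hA : IsDyadicCube n A) :
    MeasurableSet A := by
  obtain ⟨i, k, rfl⟩ := hA
  have : dyadicCube n i k = Set.pi Set.univ
      (fun j => Set.Ico ((k j : ℝ) * 2 ^ (-i)) (((k j : ℝ) + 1) * 2 ^ (-i))) := by
    ext x; simp [dyadicCube, Set.mem_pi, Set.mem_Ico]
  rw [this]
  exact MeasurableSet.univ_pi fun j => measurableSet_Ico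

lemma IsDyadicCube.measure_lt_top {n : ℕ} (σ : Measure (Fin n → ℝ))
    [IsLocallyFiniteMeasure σ] {A : Set (Fin n → ℝ)} (hA : IsDyadicCube n A) :
    σ A < ⊤ := by
  obtain ⟨i, k, rfl⟩ := hA
  have hsub : dyadicCube n i k ⊆ Set.Icc (fun j => (k j : ℝ) * 2 ^ (-i))
      (fun j => ((k j : ℝ) + 1) * 2 ^ (-i)) := by
    intro x hx
    constructor <;> intro j
    · exact (hx j).1
    · exact ((hx j).2).le
  calc σ (dyadicCube n i k) ≤ σ (Set.Icc _ _) := measure_mono hsub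
    _ < ⊤ := (isCompact_Icc).measure_lt_top

lemma measurable_finset_sup' {ι α : Type*} [MeasurableSpace α] (s : Finset ι) (hs : s.Nonempty)
    (f : ι → α → ℝ) (hf : ∀ i, Measurable (f i)) :
    Measurable (fun x => s.sup' hs (fun i => f i x)) := by
  induction hs using Finset.Nonempty.cons_induction with
  | singleton i =>
      have : (fun x => ({i} : Finset ι).sup' (Finset.singleton_nonempty i) fun j => f j x)
          = f i := by funext x; simp
      rw [this]; exact hf i
  | cons i s his hs ih =>
      have heq : (fun x => (Finset.cons i s his).sup' (Finset.cons_nonempty his) fun j => f j x)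
          = fun x => max (f i x) (s.sup' hs fun j => f j x) := by
        funext x
        rw [Finset.sup'_cons hs]
      rw [heq]
      exact (hf i).max ih

/-- Covering lemma: for a finite family of pairwise nested-or-disjoint measurable sets,
if each satisfies `ν (Q i) * c ≤ ∫⁻ x in Q i, g x ∂ν`, then so does their union. -/
lemma union_maximal_bound {ι X : Type*} [MeasurableSpace X] (ν : Measure X)
    (Q : ι → Set X) (hQm : ∀ i, MeasurableSet (Q i))
    (hnest : ∀ i j, Q i ⊆ Q j ∨ Q j ⊆ Q i ∨ Disjoint (Q i) (Q j))
    (g : X → ℝ≥0∞) (c : ℝ≥0∞) (S : Finset ι)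
    (hQg : ∀ i ∈ S, ν (Q i) * c ≤ ∫⁻ x in Q i, g x ∂ν) :
    ν (⋃ i ∈ S, Q i) * c ≤ ∫⁻ x in ⋃ i ∈ S, Q i, g x ∂ν := by
  classical
  set T : Finset (Set X) := (S.image Q).filter (fun C => Maximal (· ∈ S.image Q) C) with hT
  have hTmem : ∀ C ∈ T, ∃ i ∈ S, Q i = C := by
    intro C hC
    have := (Finset.mem_filter.mp hC).1
    simpa using Finset.mem_image.mp this
  have hcover : (⋃ i ∈ S, Q i) = ⋃ C ∈ T, C := by
    apply Set.Subset.antisymm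
    · intro x hx
      obtain ⟨i, hiS, hxi⟩ := Set.mem_iUnion₂.mp hx
      have hmem : Q i ∈ S.image Q := Finset.mem_image_of_mem Q hiS
      obtain ⟨C, hQC, hCmax⟩ := Finset.exists_le_maximal (S.image Q) hmem
      refine Set.mem_iUnion₂.mpr ⟨C, ?_, hQC hxi⟩
      exact Finset.mem_filter.mpr ⟨hCmax.1, hCmax⟩
    · intro x hx
      obtain ⟨C, hCT, hxC⟩ := Set.mem_iUnion₂.mp hx
      obtain ⟨i, hiS, rfl⟩ := hTmem C hCT
      exact Set.mem_iUnion₂.mpr ⟨i, hiS, hxC⟩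
  have hTm : ∀ C ∈ T, MeasurableSet C := by
    intro C hC
    obtain ⟨i, _, rfl⟩ := hTmem C hC
    exact hQm i
  have hdisj : (↑T : Set (Set X)).PairwiseDisjoint id := by
    intro C hCT D hDT hne
    obtain ⟨i, hiS, hQi⟩ := hTmem C (Finset.mem_coe.mp hCT)
    obtain ⟨j, hjS, hQj⟩ := hTmem D (Finset.mem_coe.mp hDT)
    have hCmax : Maximal (· ∈ S.image Q) C := (Finset.mem_filter.mp (Finset.mem_coe.mp hCT)).2
    have hDmax : Maximal (· ∈ S.image Q) D := (Finset.mem_filter.mp (Finset.mem_coe.mp hDT)).2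
    rcases hnest i j with h | h | h
    · exfalso
      apply hne
      have hCD : C ≤ D := by rw [← hQi, ← hQj]; exact h
      exact le_antisymm hCD (hCmax.2 hDmax.1 hCD)
    · exfalso
      apply hne
      have hDC : D ≤ C := by rw [← hQi, ← hQj]; exact h
      exact (le_antisymm hDC (hDmax.2 hCmax.1 hDC)).symm
    · simpa [Function.onFun, id, ← hQi, ← hQj] using h
  have hid : (⋃ C ∈ T, C) = ⋃ C ∈ T, id C := by simp [id]
  rw [hcover, hid, measure_biUnion_finset hdisj hTm, lintegral_biUnion_finset hdisj hTm,
    Finset.sum_mul]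
  apply Finset.sum_le_sum
  intro C hC
  obtain ⟨i, hiS, rfl⟩ := hTmem C hC
  exact hQg i hiS

lemma ofReal_div_mul_self (a : ℝ) (m : ℝ≥0∞) (ha : 0 ≤ a) (hm : m ≠ ⊤) (h0 : m.toReal ≠ 0) :
    ENNReal.ofReal (a / m.toReal) * m = ENNReal.ofReal a := by
  calc ENNReal.ofReal (a / m.toReal) * m
      = ENNReal.ofReal (a / m.toReal) * ENNReal.ofReal (m.toReal) := by
        rw [ENNReal.ofReal_toReal hm]
    _ = ENNReal.ofReal (a / m.toReal * m.toReal) :=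
        (ENNReal.ofReal_mul (div_nonneg ha ENNReal.toReal_nonneg)).symm
    _ = ENNReal.ofReal a := by rw [div_mul_cancel₀ a h0]

theorem wolff_lemma_A3_le_A1 (n : ℕ) (σ : Measure (Fin n → ℝ))
    [IsLocallyFiniteMeasure σ] (s : ℝ) (hs1 : 1 < s) {ι : Type*} [Fintype ι]
    (Q : ι → Set (Fin n → ℝ)) (Q₀ : Set (Fin n → ℝ))
    (hQ₀ : IsDyadicCube n Q₀) (hQ : ∀ i, IsDyadicCube n (Q i))
    (hsub : ∀ i, Q i ⊆ Q₀) (hpos : ∀ i, 0 < (σ (Q i)).toReal)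
    (α : ι → ℝ) (hα : ∀ i, 0 ≤ α i) :
    ∫ x in Q₀, (⨆ i, (Q i).indicator
        (fun _ => (1 / (σ (Q i)).toReal) *
          ∑ j ∈ Finset.univ.filter fun j => Q j ⊆ Q i, α j) x) ^ s ∂σ ≤
      (s / (s - 1)) ^ s *
        ∫ x in Q₀, (∑ i, α i / (σ (Q i)).toReal * (Q i).indicator 1 x) ^ s ∂σ := by
  have hs0 : (0:ℝ) < s := by linarith
  have hs1' : (0:ℝ) < s - 1 := by linarith
  have hs'pos : (0:ℝ) < s / (s - 1) := by positivity
  rcases isEmpty_or_nonempty ι with hempty | hne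
  · simp only [Real.iSup_of_isEmpty, Finset.univ_eq_empty, Finset.sum_empty,
      Real.zero_rpow hs0.ne']
    simp
  -- notation
  set ν : Measure (Fin n → ℝ) := σ.restrict Q₀ with hν
  set v : ι → ℝ := fun i => (1 / (σ (Q i)).toReal) *
      ∑ j ∈ Finset.univ.filter fun j => Q j ⊆ Q i, α j with hv
  set F : (Fin n → ℝ) → ℝ := fun x => ⨆ i, (Q i).indicator (fun _ => v i) x with hF
  set G : (Fin n → ℝ) → ℝ := fun x =>
      ∑ i, α i / (σ (Q i)).toReal * (Q i).indicator 1 x with hG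
  set g : (Fin n → ℝ) → ℝ≥0∞ := fun x => ENNReal.ofReal (G x) with hg
  have hQm : ∀ i, MeasurableSet (Q i) := fun i => (hQ i).measurableSet
  have hQ₀m : MeasurableSet Q₀ := hQ₀.measurableSet
  have hQ₀fin : σ Q₀ < ⊤ := hQ₀.measure_lt_top σ
  have hQifin : ∀ i, σ (Q i) ≠ ⊤ := fun i =>
    ((lt_of_le_of_lt (measure_mono (hsub i)) hQ₀fin)).ne
  have hQi0 : ∀ i, (σ (Q i)).toReal ≠ 0 := fun i => (hpos i).ne'
  have hv0 : ∀ i, 0 ≤ v i := by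
    intro i
    apply mul_nonneg (by positivity)
    exact Finset.sum_nonneg fun j _ => hα j
  -- F as a finite sup
  have hFsup : ∀ x, F x = Finset.univ.sup' Finset.univ_nonempty
      (fun i => (Q i).indicator (fun _ => v i) x) := by
    intro x
    rw [hF]
    exact (Finset.sup'_univ_eq_ciSup _).symm
  have hFmeas : Measurable F := by
    have : Measurable (fun x => Finset.univ.sup' Finset.univ_nonempty
        (fun i => (Q i).indicator (fun _ => v i) x)) :=
      measurable_finset_sup' _ _ _ fun i => measurable_const.indicator (hQm i)
    intro t ht
    have := this ht
    convert this using 1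
    ext x
    simp [hFsup x]
  have hFnn : ∀ x, 0 ≤ F x := by
    intro x
    rw [hFsup]
    obtain ⟨i⟩ := hne
    refine le_trans ?_ (Finset.le_sup' _ (Finset.mem_univ i))
    exact Set.indicator_nonneg (fun _ _ => hv0 i) x
  have hGmeas : Measurable G := by
    apply Finset.measurable_sum
    intro i _
    exact (measurable_const.indicator (hQm i)).const_mul _
  have hGnn : ∀ x, 0 ≤ G x := by
    intro x
    apply Finset.sum_nonneg
    intro i _
    apply mul_nonneg (div_nonneg (hα i) ENNReal.toReal_nonneg)
    exact Set.indicator_nonneg (fun _ _ => zero_le_one) x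
  have hgmeas : Measurable g := ENNReal.measurable_ofReal.comp hGmeas
  -- lintegral quantities
  set L : ℝ≥0∞ := ∫⁻ x, ENNReal.ofReal (F x ^ s) ∂ν with hL
  set R : ℝ≥0∞ := ∫⁻ x, (g x) ^ s ∂ν with hR
  have hrpow : ∀ p : ℝ, Measurable (fun y : ℝ => y ^ p) := fun p => by fun_prop
  haveI : IsFiniteMeasure ν := ⟨by rw [hν, Measure.restrict_apply_univ]; exact hQ₀fin⟩
  -- characterization of the superlevel sets of F
  have hlt_iff : ∀ t : ℝ, 0 < t → ∀ x, (t < F x ↔ ∃ i, x ∈ Q i ∧ t < v i) := by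
    intro t ht x
    rw [hFsup x, Finset.lt_sup'_iff]
    constructor
    · rintro ⟨i, -, hi⟩
      by_cases hx : x ∈ Q i
      · exact ⟨i, hx, by simpa [Set.indicator_of_mem hx] using hi⟩
      · rw [Set.indicator_of_notMem hx] at hi; linarith
    · rintro ⟨i, hx, hi⟩
      exact ⟨i, Finset.mem_univ i, by simpa [Set.indicator_of_mem hx] using hi⟩
  have hsetmeas : ∀ t : ℝ, MeasurableSet {x | t < F x} :=
    fun t => measurableSet_lt measurable_const hFmeas
  -- per-cube estimate
  have hcube : ∀ t : ℝ, 0 < t → ∀ i, t < v i →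
      ν (Q i) * ENNReal.ofReal t ≤ ∫⁻ x in Q i, g x ∂ν := by
    intro t ht i hi
    have hgi : ∀ x, (∑ j ∈ Finset.univ.filter fun j => Q j ⊆ Q i,
        ENNReal.ofReal (α j / (σ (Q j)).toReal) * (Q j).indicator 1 x) ≤ g x := by
      intro x
      have hnn : ∀ j ∈ (Finset.univ : Finset ι),
          (0:ℝ) ≤ α j / (σ (Q j)).toReal * (Q j).indicator 1 x := fun j _ =>
        mul_nonneg (div_nonneg (hα j) ENNReal.toReal_nonneg)
          (Set.indicator_nonneg (fun _ _ => zero_le_one) x)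
      have h1 : g x = ∑ j, ENNReal.ofReal (α j / (σ (Q j)).toReal) * (Q j).indicator 1 x := by
        simp only [hg, hG]
        rw [ENNReal.ofReal_sum_of_nonneg hnn]
        refine Finset.sum_congr rfl fun j _ => ?_
        by_cases hx : x ∈ Q j <;>
          simp [Set.indicator_of_mem, Set.indicator_of_notMem, hx]
      rw [h1]
      exact Finset.sum_le_sum_of_subset (Finset.filter_subset _ _)
    have h2 : ∫⁻ x in Q i, g x ∂ν ≥
        ∑ j ∈ Finset.univ.filter fun j => Q j ⊆ Q i, ENNReal.ofReal (α j) := by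
      calc ∫⁻ x in Q i, g x ∂ν
          ≥ ∫⁻ x in Q i, (∑ j ∈ Finset.univ.filter fun j => Q j ⊆ Q i,
              ENNReal.ofReal (α j / (σ (Q j)).toReal) * (Q j).indicator 1 x) ∂ν :=
            lintegral_mono hgi
        _ = ∑ j ∈ Finset.univ.filter fun j => Q j ⊆ Q i,
              ∫⁻ x in Q i, ENNReal.ofReal (α j / (σ (Q j)).toReal) * (Q j).indicator 1 x ∂ν := by
            apply lintegral_finset_sum'
            intro j _
            exact ((measurable_const.indicator (hQm j)).const_mul _).aemeasurable
        _ = ∑ j ∈ Finset.univ.filter fun j => Q j ⊆ Q i, ENNReal.ofReal (α j) := by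
            refine Finset.sum_congr rfl fun j hj => ?_
            have hji : Q j ⊆ Q i := (Finset.mem_filter.mp hj).2
            have hmi : Measurable ((Q j).indicator (1 : (Fin n → ℝ) → ℝ≥0∞)) :=
              measurable_const.indicator (hQm j)
            rw [lintegral_const_mul _ hmi, lintegral_indicator_one (hQm j)]
            have hrr : (ν.restrict (Q i)) (Q j) = σ (Q j) := by
              rw [Measure.restrict_apply (hQm j), hν, Measure.restrict_apply
                ((hQm j).inter (hQm i))]
              rw [Set.inter_eq_self_of_subset_left hji,
                Set.inter_eq_self_of_subset_left (hsub j)]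
            rw [hrr]
            exact ofReal_div_mul_self (α j) (σ (Q j)) (hα j) (hQifin j) (hQi0 j)
    have h3 : ν (Q i) = ENNReal.ofReal ((σ (Q i)).toReal) := by
      rw [hν, Measure.restrict_apply (hQm i), Set.inter_eq_self_of_subset_left (hsub i),
        ENNReal.ofReal_toReal (hQifin i)]
    have h4 : (σ (Q i)).toReal * t ≤ ∑ j ∈ Finset.univ.filter fun j => Q j ⊆ Q i, α j := by
      simp only [hv] at hi
      have hc := hpos i
      have hinv : (σ (Q i)).toReal * (1 / (σ (Q i)).toReal) = 1 := by field_simp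
      have h5 := mul_lt_mul_of_pos_left hi hc
      rw [← mul_assoc, hinv, one_mul] at h5
      exact h5.le
    calc ν (Q i) * ENNReal.ofReal t = ENNReal.ofReal ((σ (Q i)).toReal * t) := by
          rw [h3, ← ENNReal.ofReal_mul ENNReal.toReal_nonneg]
      _ ≤ ENNReal.ofReal (∑ j ∈ Finset.univ.filter fun j => Q j ⊆ Q i, α j) :=
          ENNReal.ofReal_le_ofReal h4
      _ = ∑ j ∈ Finset.univ.filter fun j => Q j ⊆ Q i, ENNReal.ofReal (α j) :=
          ENNReal.ofReal_sum_of_nonneg (fun j _ => hα j)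
      _ ≤ _ := h2
  -- distribution estimate
  have hdist : ∀ t : ℝ, 0 < t →
      ν {x | t < F x} * ENNReal.ofReal t ≤ ∫⁻ x in {x | t < F x}, g x ∂ν := by
    intro t ht
    have hset : {x | t < F x} = ⋃ i ∈ Finset.univ.filter fun i => t < v i, Q i := by
      ext x
      simp only [Set.mem_setOf_eq, hlt_iff t ht x, Set.mem_iUnion, Finset.mem_filter,
        Finset.mem_univ, true_and, exists_prop]
      tauto
    rw [hset]
    exact union_maximal_bound ν Q hQm
      (fun i j => dyadic_subset_or_disjoint (hQ i) (hQ j)) g (ENNReal.ofReal t) _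
      (fun i hiS => hcube t ht i (Finset.mem_filter.mp hiS).2)
  -- auxiliary function for Holder
  set φ : (Fin n → ℝ) → ℝ≥0∞ := fun x => ENNReal.ofReal (F x ^ (s-1)) with hφ
  have hφmeas : Measurable φ :=
    ENNReal.measurable_ofReal.comp ((hrpow (s-1)).comp hFmeas)
  set H : ℝ≥0∞ := ∫⁻ x, g x * φ x ∂ν with hH
  -- layer cake
  have hlayer : L = ENNReal.ofReal s *
      ∫⁻ t in Set.Ioi (0:ℝ), ν {a | t < F a} * ENNReal.ofReal (t ^ (s-1)) :=
    lintegral_rpow_eq_lintegral_meas_lt_mul ν (Filter.Eventually.of_forall hFnn)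
      hFmeas.aemeasurable hs0
  -- the elementary integral
  have hIoo : ∀ b : ℝ, 0 ≤ b → ∫⁻ t in Set.Ioo 0 b, ENNReal.ofReal (t ^ (s-2))
      = ENNReal.ofReal (b ^ (s-1) / (s-1)) := by
    intro b hb
    rcases eq_or_lt_of_le hb with rfl | hb
    · simp [Real.zero_rpow (by linarith : s - 1 ≠ 0)]
    · have hint : IntegrableOn (fun t : ℝ => t ^ (s-2)) (Set.Ioo 0 b) := by
        have h1 : IntervalIntegrable (fun t : ℝ => t ^ (s-2)) volume 0 b :=
          intervalIntegral.intervalIntegrable_rpow' (by linarith)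
        have h2 : IntegrableOn (fun t : ℝ => t ^ (s-2)) (Set.Ioc 0 b) :=
          (intervalIntegrable_iff_integrableOn_Ioc_of_le hb.le).mp h1
        exact h2.mono_set Set.Ioo_subset_Ioc_self
      rw [← ofReal_integral_eq_lintegral_ofReal hint ?hnn]
      case hnn =>
        filter_upwards [ae_restrict_mem measurableSet_Ioo] with t ht
        exact Real.rpow_nonneg ht.1.le _
      congr 1
      rw [← MeasureTheory.integral_Ioc_eq_integral_Ioo, ← intervalIntegral.integral_of_le hb.le,
        integral_rpow (Or.inl (by linarith : (-1:ℝ) < s-2))]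
      rw [Real.zero_rpow (by linarith : s - 2 + 1 ≠ 0)]
      have he : s - 2 + 1 = s - 1 := by ring
      rw [he]
      ring
  -- pointwise bound for the layer-cake integrand
  set A : Set (ℝ × (Fin n → ℝ)) := {p | p.1 < F p.2} with hA
  have hAmeas : MeasurableSet A := measurableSet_lt measurable_fst (hFmeas.comp measurable_snd)
  have key1 : ∀ t ∈ Set.Ioi (0:ℝ), ν {a | t < F a} * ENNReal.ofReal (t ^ (s-1))
      ≤ ∫⁻ x, ENNReal.ofReal (t ^ (s-2)) * (A.indicator 1 (t, x)) * g x ∂ν := by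
    intro t ht
    rw [Set.mem_Ioi] at ht
    have h1 : ENNReal.ofReal (t ^ (s-1)) = ENNReal.ofReal t * ENNReal.ofReal (t ^ (s-2)) := by
      rw [← ENNReal.ofReal_mul ht.le]
      congr 1
      rw [show s - 1 = 1 + (s-2) by ring, Real.rpow_add ht, Real.rpow_one]
    have h2 : ν {a | t < F a} * ENNReal.ofReal (t ^ (s-1))
        ≤ (∫⁻ x in {a | t < F a}, g x ∂ν) * ENNReal.ofReal (t ^ (s-2)) := by
      rw [h1, ← mul_assoc]
      exact mul_le_mul_left (hdist t ht) _
    refine h2.trans (le_of_eq ?_)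
    rw [← lintegral_indicator (hsetmeas t), ← lintegral_mul_const _
      ((hgmeas.indicator (hsetmeas t)))]
    refine lintegral_congr fun x => ?_
    by_cases hx : t < F x
    · rw [Set.indicator_of_mem (show x ∈ {a | t < F a} from hx),
        Set.indicator_of_mem (show (t,x) ∈ A from hx)]
      simp [mul_comm]
    · rw [Set.indicator_of_notMem (show x ∉ {a | t < F a} from hx),
        Set.indicator_of_notMem (show (t,x) ∉ A from hx)]
      simp
  -- Tonelli
  have hprodmeas : Measurable (fun p : ℝ × (Fin n → ℝ) =>
      ENNReal.ofReal (p.1 ^ (s-2)) * (A.indicator 1 p) * g p.2) := by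
    apply Measurable.mul
    apply Measurable.mul
    · exact ENNReal.measurable_ofReal.comp ((hrpow (s-2)).comp measurable_fst)
    · exact measurable_const.indicator hAmeas
    · exact hgmeas.comp measurable_snd
  have hswap : ∫⁻ t in Set.Ioi (0:ℝ), ∫⁻ x, ENNReal.ofReal (t ^ (s-2))
        * (A.indicator 1 (t, x)) * g x ∂ν
      = ∫⁻ x, (∫⁻ t in Set.Ioi (0:ℝ), ENNReal.ofReal (t ^ (s-2))
        * (A.indicator 1 (t, x)) * g x) ∂ν := by
    apply lintegral_lintegral_swap
    exact (hprodmeas.comp (measurable_fst.prodMk measurable_snd)).aemeasurable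
  -- inner integral evaluation
  have key3 : ∀ x, (∫⁻ t in Set.Ioi (0:ℝ), ENNReal.ofReal (t ^ (s-2))
      * (A.indicator 1 (t, x)) * g x)
      = g x * (φ x * ENNReal.ofReal (1/(s-1))) := by
    intro x
    have hpt : ∀ t : ℝ, ENNReal.ofReal (t ^ (s-2)) * (A.indicator 1 (t, x)) * g x
        = g x * ((Set.Iio (F x)).indicator (fun u => ENNReal.ofReal (u ^ (s-2))) t) := by
      intro t
      by_cases hx : t < F x
      · rw [Set.indicator_of_mem (show (t,x) ∈ A from hx),
          Set.indicator_of_mem (show t ∈ Set.Iio (F x) from hx)]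
        simp [mul_comm]
      · rw [Set.indicator_of_notMem (show (t,x) ∉ A from hx),
          Set.indicator_of_notMem (show t ∉ Set.Iio (F x) from hx)]
        simp
    simp_rw [hpt]
    rw [lintegral_const_mul' _ _ (by rw [hg]; exact ENNReal.ofReal_ne_top),
      lintegral_indicator measurableSet_Iio, Measure.restrict_restrict measurableSet_Iio]
    congr 1
    rw [show Set.Iio (F x) ∩ Set.Ioi 0 = Set.Ioo 0 (F x) by
      rw [Set.inter_comm, Set.Ioi_inter_Iio]]
    rw [hIoo (F x) (hFnn x), hφ, ← ENNReal.ofReal_mul (Real.rpow_nonneg (hFnn x) _)]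
    congr 1
    ring
  -- put together: L ≤ ofReal (s/(s-1)) * H
  have hLH : L ≤ ENNReal.ofReal (s/(s-1)) * H := by
    calc L = ENNReal.ofReal s *
        ∫⁻ t in Set.Ioi (0:ℝ), ν {a | t < F a} * ENNReal.ofReal (t ^ (s-1)) := hlayer
      _ ≤ ENNReal.ofReal s * ∫⁻ t in Set.Ioi (0:ℝ), ∫⁻ x, ENNReal.ofReal (t ^ (s-2))
            * (A.indicator 1 (t, x)) * g x ∂ν := by
          refine mul_le_mul_right ?_ _
          refine lintegral_mono_ae ?_
          filter_upwards [ae_restrict_mem measurableSet_Ioi] with t ht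
          exact key1 t ht
      _ = ENNReal.ofReal s * ∫⁻ x, g x * (φ x * ENNReal.ofReal (1/(s-1))) ∂ν := by
          rw [hswap]
          congr 1
          exact lintegral_congr key3
      _ = ENNReal.ofReal s * (ENNReal.ofReal (1/(s-1)) * H) := by
          congr 1
          rw [hH]
          rw [← lintegral_const_mul' _ _ (show ENNReal.ofReal (1/(s-1)) ≠ ⊤ from
            ENNReal.ofReal_ne_top)]
          refine lintegral_congr fun x => ?_
          ring
      _ = ENNReal.ofReal (s/(s-1)) * H := by
          rw [← mul_assoc, ← ENNReal.ofReal_mul hs0.le]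
          congr 2
          field_simp
  -- Holder's inequality
  have hpq : Real.HolderConjugate s (s/(s-1)) := Real.HolderConjugate.conjExponent hs1
  have hφL : ∫⁻ x, φ x ^ (s/(s-1)) ∂ν = L := by
    rw [hL]
    refine lintegral_congr fun x => ?_
    rw [hφ, ENNReal.ofReal_rpow_of_nonneg (Real.rpow_nonneg (hFnn x) _) hs'pos.le,
      ← Real.rpow_mul (hFnn x)]
    congr 2
    field_simp
  have hHolder : H ≤ R ^ (1/s) * L ^ ((s-1)/s) := by
    have h := ENNReal.lintegral_mul_le_Lp_mul_Lq ν hpq hgmeas.aemeasurable hφmeas.aemeasurable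
    have h2 : ∫⁻ a, (g * φ) a ∂ν = H := by rw [hH]; rfl
    rw [h2, hφL] at h
    have h3 : (1:ℝ) / (s/(s-1)) = (s-1)/s := one_div_div _ _
    rw [h3] at h
    exact h
  -- finiteness of L and R
  have hBF : ∀ x, F x ≤ ∑ i, v i := by
    intro x
    rw [hFsup]
    apply Finset.sup'_le
    intro i _
    refine le_trans ?_ (Finset.single_le_sum (fun j _ => hv0 j) (Finset.mem_univ i))
    by_cases hx : x ∈ Q i
    · rw [Set.indicator_of_mem hx]
    · rw [Set.indicator_of_notMem hx]; exact hv0 i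
  have hLtop : L ≠ ⊤ := by
    have : L ≤ ENNReal.ofReal ((∑ i, v i) ^ s) * ν Set.univ := by
      rw [← lintegral_const]
      exact lintegral_mono fun x => ENNReal.ofReal_le_ofReal
        (Real.rpow_le_rpow (hFnn x) (hBF x) hs0.le)
    refine (this.trans_lt ?_).ne
    exact ENNReal.mul_lt_top ENNReal.ofReal_lt_top (measure_lt_top ν _)
  have hBG : ∀ x, G x ≤ ∑ i, α i / (σ (Q i)).toReal := by
    intro x
    rw [hG]
    apply Finset.sum_le_sum
    intro i _
    by_cases hx : x ∈ Q i
    · rw [Set.indicator_of_mem hx]; simp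
    · rw [Set.indicator_of_notMem hx]
      simp [div_nonneg (hα i) ENNReal.toReal_nonneg]
  have hRtop : R ≠ ⊤ := by
    have : R ≤ ENNReal.ofReal ((∑ i, α i / (σ (Q i)).toReal) ^ s) * ν Set.univ := by
      rw [← lintegral_const]
      refine lintegral_mono fun x => ?_
      calc g x ^ s ≤ (ENNReal.ofReal (∑ i, α i / (σ (Q i)).toReal)) ^ s :=
            ENNReal.rpow_le_rpow (by rw [hg]; exact ENNReal.ofReal_le_ofReal (hBG x)) hs0.le
        _ = ENNReal.ofReal ((∑ i, α i / (σ (Q i)).toReal) ^ s) :=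
            ENNReal.ofReal_rpow_of_nonneg (le_trans (hGnn x) (hBG x)) hs0.le
    refine (this.trans_lt ?_).ne
    exact ENNReal.mul_lt_top ENNReal.ofReal_lt_top (measure_lt_top ν _)
  -- bootstrap
  have hmain : L ≤ ENNReal.ofReal ((s/(s-1)) ^ s) * R := by
    by_cases hL0 : L = 0
    · rw [hL0]; exact zero_le
    have hexp : (1:ℝ)/s + (s-1)/s = 1 := by field_simp; ring
    have hsplit : L = L ^ ((1:ℝ)/s) * L ^ ((s-1)/s) := by
      rw [← ENNReal.rpow_add _ _ hL0 hLtop, hexp, ENNReal.rpow_one]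
    have hc0 : L ^ ((s-1)/s) ≠ 0 := by
      intro h
      rcases (ENNReal.rpow_eq_zero_iff).mp h with ⟨h1,-⟩|⟨h1,-⟩
      · exact hL0 h1
      · exact hLtop h1
    have hct : L ^ ((s-1)/s) ≠ ⊤ :=
      ENNReal.rpow_ne_top_of_nonneg (div_nonneg hs1'.le hs0.le) hLtop
    have step1 : L ≤ ENNReal.ofReal (s/(s-1)) * R ^ ((1:ℝ)/s) * L ^ ((s-1)/s) := by
      calc L ≤ ENNReal.ofReal (s/(s-1)) * H := hLH
        _ ≤ ENNReal.ofReal (s/(s-1)) * (R ^ ((1:ℝ)/s) * L ^ ((s-1)/s)) :=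
            mul_le_mul_right hHolder _
        _ = ENNReal.ofReal (s/(s-1)) * R ^ ((1:ℝ)/s) * L ^ ((s-1)/s) := by ring
    have step2 : L ^ ((1:ℝ)/s) ≤ ENNReal.ofReal (s/(s-1)) * R ^ ((1:ℝ)/s) := by
      have h6 : L ^ ((1:ℝ)/s) * L ^ ((s-1)/s)
          ≤ (ENNReal.ofReal (s/(s-1)) * R ^ ((1:ℝ)/s)) * L ^ ((s-1)/s) := by
        rw [← hsplit]
        exact step1
      exact (ENNReal.mul_le_mul_iff_left hc0 hct).mp h6
    have step3 := ENNReal.rpow_le_rpow step2 hs0.le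
    rw [← ENNReal.rpow_mul, one_div_mul_cancel hs0.ne', ENNReal.rpow_one] at step3
    rw [ENNReal.mul_rpow_of_nonneg _ _ hs0.le, ← ENNReal.rpow_mul,
      one_div_mul_cancel hs0.ne', ENNReal.rpow_one,
      ENNReal.ofReal_rpow_of_pos hs'pos] at step3
    exact step3
  -- convert to real integrals
  show ∫ x in Q₀, F x ^ s ∂σ ≤ (s / (s - 1)) ^ s * ∫ x in Q₀, G x ^ s ∂σ
  have hLeq : ∫ x in Q₀, F x ^ s ∂σ = L.toReal := by
    rw [hL, hν]
    exact integral_eq_lintegral_of_nonneg_ae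
      (Filter.Eventually.of_forall fun x => Real.rpow_nonneg (hFnn x) s)
      (((hrpow s).comp hFmeas).aestronglyMeasurable)
  have hReq : ∫ x in Q₀, G x ^ s ∂σ = R.toReal := by
    rw [hR, hν]
    rw [integral_eq_lintegral_of_nonneg_ae
      (Filter.Eventually.of_forall fun x => Real.rpow_nonneg (hGnn x) s)
      (((hrpow s).comp hGmeas).aestronglyMeasurable)]
    congr 1
    refine lintegral_congr fun x => ?_
    rw [hg, ENNReal.ofReal_rpow_of_nonneg (hGnn x) hs0.le]
  rw [hLeq, hReq]
  have := ENNReal.toReal_mono (by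
      exact ENNReal.mul_ne_top ENNReal.ofReal_ne_top hRtop) hmain
  rwa [ENNReal.toReal_mul, ENNReal.toReal_ofReal (by positivity)] at this

end
end

section
/- Let 1 < q < ∞ and let F be a dyadic cube, σ, ω locally finite Borel measures, K : D → [0,∞) with finitely many nonzero values. If F belongs to a principal-cube family with σ(F) ≤ 2 σ(E(F)) for a measurable E(F) ⊆ F, then {σ(F)^{-1/p} (∫_F (∑_{Q ⊆ F} K(Q) σ(Q) 1_Q)^q dω)^{1/q}}^r ≤ 2 c(q)^{r/q} ∫_{E(F)} (M_σ W^q_{K,ω}[σ])^{r/q} dσ, where 1/q = 1/r + 1/p, c(q) is the constant from the Cascante–Ortega–Verbitsky lemma, W^q_{K,ω}[σ](x) = ∑_Q K(Q) ω(Q) ((1/ω(Q)) ∑_{Q'⊆Q} K(Q') ω(Q') σ(Q'))^{q-1} 1_Q(x), and M_σ is the dyadic maximal operator with respect to σ. -/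
open MeasureTheory ENNReal Classical

noncomputable section

def cube (n : ℕ) (P : ℤ × (Fin n → ℤ)) : Set (Fin n → ℝ) := dyadicCube n P.1 P.2

/-- The constant `c(q)` from the Cascante–Ortega–Verbitsky lemma. -/
def covConst (s : ℝ) : ℝ :=
  if s ≤ 2 then s
  else (∏ j ∈ Finset.range ((⌈s - 2⌉).toNat + 1), (s - j)) ^
    ((s - 1) / (s - (⌈s - 2⌉).toNat - 1))

/-- The dyadic Hardy–Littlewood maximal operator with respect to `σ`. -/
def dyadicMaximal {n : ℕ} (σ : Measure (Fin n → ℝ)) (f : (Fin n → ℝ) → ℝ≥0∞)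
    (x : Fin n → ℝ) : ℝ≥0∞ :=
  ⨆ (i : ℤ) (k : Fin n → ℤ) (_ : x ∈ dyadicCube n i k),
    (∫⁻ y in dyadicCube n i k, f y ∂σ) / σ (dyadicCube n i k)

/-- `W^q_{K,ω}[σ]`, terms with `ω(Q) = 0` vanishing. -/
def wolffPot (n : ℕ) (K : ℤ × (Fin n → ℤ) → ℝ≥0∞) (ω σ : Measure (Fin n → ℝ))
    (q : ℝ) (x : Fin n → ℝ) : ℝ≥0∞ :=
  ∑' P : ℤ × (Fin n → ℤ), (cube n P).indicator
    (fun _ => K P * ω (cube n P) *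
      ((∑' P' : ℤ × (Fin n → ℤ),
          if cube n P' ⊆ cube n P then K P' * ω (cube n P') * σ (cube n P') else 0) /
        ω (cube n P)) ^ (q - 1)) x

lemma measurableSet_dyadicCube (n : ℕ) (i : ℤ) (k : Fin n → ℤ) :
    MeasurableSet (dyadicCube n i k) := by
  have : dyadicCube n i k =
      Set.pi Set.univ (fun j => Set.Ico ((k j : ℝ) * 2 ^ (-i)) (((k j : ℝ) + 1) * 2 ^ (-i))) := by
    ext x; simp [dyadicCube, Set.mem_pi, Set.mem_Ico]
  rw [this]
  exact MeasurableSet.univ_pi fun j => measurableSet_Ico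

lemma measurableSet_cube (n : ℕ) (P : ℤ × (Fin n → ℤ)) : MeasurableSet (cube n P) :=
  measurableSet_dyadicCube n P.1 P.2

lemma measure_dyadicCube_lt_top {n : ℕ} (μ : Measure (Fin n → ℝ)) [IsLocallyFiniteMeasure μ]
    (i : ℤ) (k : Fin n → ℤ) : μ (dyadicCube n i k) < ∞ := by
  have hsub : dyadicCube n i k ⊆
      Set.Icc (fun j => (k j : ℝ) * 2 ^ (-i)) (fun j => ((k j : ℝ) + 1) * 2 ^ (-i)) := by
    intro x hx
    constructor <;> intro j
    · exact (hx j).1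
    · exact le_of_lt (hx j).2
  exact lt_of_le_of_lt (measure_mono hsub) (isCompact_Icc.measure_lt_top)

lemma measure_cube_lt_top {n : ℕ} (μ : Measure (Fin n → ℝ)) [IsLocallyFiniteMeasure μ]
    (P : ℤ × (Fin n → ℤ)) : μ (cube n P) < ∞ :=
  measure_dyadicCube_lt_top μ P.1 P.2

lemma dyadic_interval_subset {i i' : ℤ} (h : i' ≤ i) (a b : ℤ) (t : ℝ)
    (h1 : (a:ℝ) * 2^(-i) ≤ t) (h2 : t < ((a:ℝ)+1) * 2^(-i))
    (h3 : (b:ℝ) * 2^(-i') ≤ t) (h4 : t < ((b:ℝ)+1) * 2^(-i')) :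
    ∀ y : ℝ, (a:ℝ) * 2^(-i) ≤ y → y < ((a:ℝ)+1) * 2^(-i) →
      (b:ℝ) * 2^(-i') ≤ y ∧ y < ((b:ℝ)+1) * 2^(-i') := by
  have hu : (0:ℝ) < 2^(-i) := zpow_pos (by norm_num) _
  set M : ℤ := 2 ^ (i - i').toNat with hMdef
  have hM : (2:ℝ)^(-i') = (M:ℝ) * 2^(-i) := by
    have : (M:ℝ) = (2:ℝ) ^ (i - i') := by
      rw [hMdef]
      push_cast
      rw [← zpow_natCast (2:ℝ) (i - i').toNat, Int.toNat_of_nonneg (by omega)]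
    rw [this, ← zpow_add₀ (by norm_num : (2:ℝ) ≠ 0)]
    ring_nf
  -- integer inequalities
  have hbM_le_a : b * M ≤ a := by
    have : (b:ℝ) * (M:ℝ) * 2^(-i) < ((a:ℝ)+1) * 2^(-i) := by
      calc (b:ℝ) * (M:ℝ) * 2^(-i) = (b:ℝ) * 2^(-i') := by rw [hM]; ring
        _ ≤ t := h3
        _ < _ := h2
    have := (mul_lt_mul_iff_left₀ hu).mp this
    have : (b * M : ℤ) < a + 1 := by exact_mod_cast (by push_cast; linarith : ((b*M : ℤ) : ℝ) < ((a+1 : ℤ) : ℝ))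
    omega
  have ha_lt : a + 1 ≤ (b + 1) * M := by
    have : (a:ℝ) * 2^(-i) < ((b:ℝ)+1) * (M:ℝ) * 2^(-i) := by
      calc (a:ℝ) * 2^(-i) ≤ t := h1
        _ < ((b:ℝ)+1) * 2^(-i') := h4
        _ = ((b:ℝ)+1) * (M:ℝ) * 2^(-i) := by rw [hM]; ring
    have := (mul_lt_mul_iff_left₀ hu).mp this
    have : (a : ℤ) < (b + 1) * M := by exact_mod_cast (by push_cast; linarith : ((a:ℤ):ℝ) < (((b+1)*M : ℤ) : ℝ))
    omega
  intro y hy1 hy2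
  constructor
  · calc (b:ℝ) * 2^(-i') = (b:ℝ) * (M:ℝ) * 2^(-i) := by rw [hM]; ring
      _ ≤ (a:ℝ) * 2^(-i) := by
          apply mul_le_mul_of_nonneg_right _ (le_of_lt hu)
          exact_mod_cast (by exact_mod_cast hbM_le_a : ((b*M:ℤ):ℝ) ≤ ((a:ℤ):ℝ))
      _ ≤ y := hy1
  · calc y < ((a:ℝ)+1) * 2^(-i) := hy2
      _ ≤ ((b:ℝ)+1) * (M:ℝ) * 2^(-i) := by
          apply mul_le_mul_of_nonneg_right _ (le_of_lt hu)
          exact_mod_cast (by exact_mod_cast ha_lt : ((a+1:ℤ):ℝ) ≤ (((b+1)*M:ℤ):ℝ))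
      _ = ((b:ℝ)+1) * 2^(-i') := by rw [hM]; ring

/-- Two dyadic cubes that intersect are nested. -/
lemma dyadicCube_nested {n : ℕ} {i i' : ℤ} {k k' : Fin n → ℤ} {x : Fin n → ℝ}
    (hx : x ∈ dyadicCube n i k) (hx' : x ∈ dyadicCube n i' k') :
    dyadicCube n i k ⊆ dyadicCube n i' k' ∨ dyadicCube n i' k' ⊆ dyadicCube n i k := by
  rcases le_total i' i with h | h
  · left
    intro y hy j
    exact dyadic_interval_subset h (k j) (k' j) (x j) (hx j).1 (hx j).2 (hx' j).1 (hx' j).2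
      (y j) (hy j).1 (hy j).2
  · right
    intro y hy j
    exact dyadic_interval_subset h (k' j) (k j) (x j) (hx' j).1 (hx' j).2 (hx j).1 (hx j).2
      (y j) (hy j).1 (hy j).2

lemma cube_nested {n : ℕ} {P P' : ℤ × (Fin n → ℤ)} {x : Fin n → ℝ}
    (hx : x ∈ cube n P) (hx' : x ∈ cube n P') :
    cube n P ⊆ cube n P' ∨ cube n P' ⊆ cube n P :=
  dyadicCube_nested hx hx'


lemma real_tangent {x d q : ℝ} (hx : 0 ≤ x) (hd : 0 ≤ d) (hq : 1 ≤ q) :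
    (x + d) ^ q ≤ x ^ q + q * d * (x + d) ^ (q - 1) := by
  rcases eq_or_lt_of_le hd with h | h
  · rw [← h]; simp
  · have hxd : x < x + d := by linarith
    have hcont : Continuous fun t : ℝ => t ^ q :=
      continuous_iff_continuousAt.mpr fun t =>
        (Real.hasDerivAt_rpow_const (Or.inr hq)).continuousAt
    obtain ⟨c, hc, hceq⟩ := exists_hasDerivAt_eq_slope (fun t => t ^ q)
      (fun t => q * t ^ (q - 1)) hxd hcont.continuousOn
      (fun t _ => Real.hasDerivAt_rpow_const (Or.inr hq))
    have hc0 : 0 ≤ c := le_trans hx (le_of_lt hc.1)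
    have hd' : x + d - x = d := by ring
    rw [hd'] at hceq
    have hkey : (x + d) ^ q - x ^ q = q * c ^ (q - 1) * d :=
      ((div_eq_iff (ne_of_gt h)).mp hceq.symm)
    have hcy : c ^ (q - 1) ≤ (x + d) ^ (q - 1) :=
      Real.rpow_le_rpow hc0 (le_of_lt hc.2) (by linarith)
    nlinarith [mul_le_mul_of_nonneg_left hcy (by positivity : (0:ℝ) ≤ q * d)]

lemma ennreal_tangent {q : ℝ} (hq : 1 ≤ q) (x d : ℝ≥0∞) :
    (x + d) ^ q ≤ x ^ q + ENNReal.ofReal q * d * (x + d) ^ (q - 1) := by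
  have hq0 : (0:ℝ) < q := lt_of_lt_of_le one_pos hq
  by_cases hx : x = ∞
  · have : x ^ q = ∞ := by rw [hx]; exact ENNReal.top_rpow_of_pos hq0
    rw [this]
    exact le_trans le_top (le_add_right le_rfl)
  by_cases hd : d = ∞
  · have h1 : x + d = ∞ := by rw [hd]; exact add_top x
    have h2 : ((x + ⊤) ^ (q - 1) : ℝ≥0∞) ≠ 0 := by
      rw [add_top]; simp [ENNReal.rpow_eq_zero_iff]; linarith
    have h3 : ENNReal.ofReal q * d * (x + d) ^ (q - 1) = ∞ := by
      rw [hd, ENNReal.mul_top (ne_of_gt (ENNReal.ofReal_pos.mpr hq0))]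
      exact ENNReal.top_mul h2
    rw [h3]
    exact le_trans le_top (le_add_left le_rfl)
  · rw [← ENNReal.ofReal_toReal hx, ← ENNReal.ofReal_toReal hd]
    rw [← ENNReal.ofReal_add ENNReal.toReal_nonneg ENNReal.toReal_nonneg,
      ENNReal.ofReal_rpow_of_nonneg (by positivity) (le_of_lt hq0),
      ENNReal.ofReal_rpow_of_nonneg ENNReal.toReal_nonneg (le_of_lt hq0),
      ENNReal.ofReal_rpow_of_nonneg (by positivity) (by linarith : (0:ℝ) ≤ q - 1),
      ← ENNReal.ofReal_mul (by linarith : (0:ℝ) ≤ q),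
      ← ENNReal.ofReal_mul (by positivity),
      ← ENNReal.ofReal_add (by positivity) (by positivity)]
    exact ENNReal.ofReal_le_ofReal
      (real_tangent ENNReal.toReal_nonneg ENNReal.toReal_nonneg hq)

lemma exists_max_of_total {ι : Type*} (R : ι → ι → Prop) :
    ∀ (s : Finset ι), s.Nonempty →
    (∀ i ∈ s, ∀ j ∈ s, R i j ∨ R j i) →
    (∀ i ∈ s, ∀ j ∈ s, ∀ k ∈ s, R i j → R j k → R i k) →
    ∃ m ∈ s, ∀ j ∈ s, R j m := by
  classical
  intro s
  induction s using Finset.induction_on with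
  | empty => intro h; simp at h
  | @insert a s ha ih =>
    intro _ htot htrans
    rcases s.eq_empty_or_nonempty with rfl | hs
    · refine ⟨a, by simp, ?_⟩
      intro j hj
      simp only [Finset.mem_insert, Finset.notMem_empty, or_false] at hj
      subst hj
      rcases htot j (by simp) j (by simp) with h | h <;> exact h
    · obtain ⟨m, hm, hmax⟩ := ih hs
        (fun i hi j hj => htot i (Finset.mem_insert_of_mem hi) j (Finset.mem_insert_of_mem hj))
        (fun i hi j hj k hk => htrans i (Finset.mem_insert_of_mem hi) j
          (Finset.mem_insert_of_mem hj) k (Finset.mem_insert_of_mem hk))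
      have hma : m ∈ insert a s := Finset.mem_insert_of_mem hm
      have haa : a ∈ insert a s := Finset.mem_insert_self a s
      rcases htot a haa m hma with h | h
      · refine ⟨m, hma, ?_⟩
        intro j hj
        rcases Finset.mem_insert.mp hj with rfl | hj'
        · exact h
        · exact hmax j hj'
      · refine ⟨a, haa, ?_⟩
        intro j hj
        rcases Finset.mem_insert.mp hj with rfl | hj'
        · rcases htot j haa j haa with h' | h' <;> exact h'
        · exact htrans j (Finset.mem_insert_of_mem hj') m hma a haa (hmax j hj') h

lemma chain_pow_le {ι : Type*} (R : ι → ι → Prop) [∀ j i : ι, Decidable (R j i)]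
    {q : ℝ} (hq : 1 ≤ q) (s : Finset ι)
    (htot : ∀ i ∈ s, ∀ j ∈ s, R i j ∨ R j i)
    (htrans : ∀ i ∈ s, ∀ j ∈ s, ∀ k ∈ s, R i j → R j k → R i k)
    (b : ι → ℝ≥0∞) :
    (∑ i ∈ s, b i) ^ q ≤
      ENNReal.ofReal q * ∑ i ∈ s, b i * (∑ j ∈ s.filter (fun j => R j i), b j) ^ (q - 1) := by
  classical
  induction s using Finset.strongInductionOn with
  | _ s ih =>
    rcases s.eq_empty_or_nonempty with rfl | hne
    · simp [ENNReal.zero_rpow_of_pos (lt_of_lt_of_le one_pos hq)]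
    · obtain ⟨m, hm, hmax⟩ := exists_max_of_total R s hne htot htrans
      have hsub : s.erase m ⊂ s := Finset.erase_ssubset hm
      have htot' : ∀ i ∈ s.erase m, ∀ j ∈ s.erase m, R i j ∨ R j i :=
        fun i hi j hj => htot i (Finset.mem_of_mem_erase hi) j (Finset.mem_of_mem_erase hj)
      have htrans' : ∀ i ∈ s.erase m, ∀ j ∈ s.erase m, ∀ k ∈ s.erase m, R i j → R j k → R i k :=
        fun i hi j hj k hk => htrans i (Finset.mem_of_mem_erase hi) j (Finset.mem_of_mem_erase hj)
          k (Finset.mem_of_mem_erase hk)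
      have hsum : ∑ i ∈ s, b i = (∑ i ∈ s.erase m, b i) + b m := by
        rw [add_comm, Finset.add_sum_erase s b hm]
      have hfiltm : s.filter (fun j => R j m) = s :=
        Finset.filter_true_of_mem (fun j hj => hmax j hj)
      calc (∑ i ∈ s, b i) ^ q
          ≤ (∑ i ∈ s.erase m, b i) ^ q +
            ENNReal.ofReal q * b m * (∑ i ∈ s, b i) ^ (q - 1) := by
            rw [hsum]; exact ennreal_tangent hq _ _
        _ ≤ ENNReal.ofReal q * (∑ i ∈ s.erase m, b i *
              (∑ j ∈ (s.erase m).filter (fun j => R j i), b j) ^ (q - 1)) +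
            ENNReal.ofReal q * (b m * (∑ j ∈ s.filter (fun j => R j m), b j) ^ (q - 1)) := by
            apply add_le_add
            · exact ih _ hsub htot' htrans'
            · rw [hfiltm, mul_assoc]
        _ ≤ ENNReal.ofReal q * (∑ i ∈ s.erase m, b i *
              (∑ j ∈ s.filter (fun j => R j i), b j) ^ (q - 1)) +
            ENNReal.ofReal q * (b m * (∑ j ∈ s.filter (fun j => R j m), b j) ^ (q - 1)) := by
            gcongr with i hi <;>
              first
                | linarith
                | exact Finset.sum_le_sum_of_subset
                    (Finset.filter_subset_filter _ (Finset.erase_subset m s))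
        _ = ENNReal.ofReal q * ∑ i ∈ s, b i *
              (∑ j ∈ s.filter (fun j => R j i), b j) ^ (q - 1) := by
            rw [← mul_add, add_comm,
              ← Finset.add_sum_erase s
                (fun i => b i * (∑ j ∈ s.filter (fun j => R j i), b j) ^ (q - 1)) hm]

lemma finset_holder {ι : Type*} (s : Finset ι) (u v : ι → ℝ≥0∞) {α : ℝ}
    (h0 : 0 < α) (h1 : α < 1) :
    ∑ c ∈ s, (u c) ^ α * (v c) ^ (1 - α) ≤
      (∑ c ∈ s, u c) ^ α * (∑ c ∈ s, v c) ^ (1 - α) := by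
  have hconj : (1/α).HolderConjugate (1/(1-α)) := by
    refine Real.holderConjugate_iff.mpr ⟨?_, ?_⟩
    · rw [lt_div_iff₀ h0]; linarith
    · rw [one_div, one_div, inv_inv, inv_inv]; ring
  have e1 : ∑ c ∈ s, ((u c) ^ α) ^ (1/α) = ∑ c ∈ s, u c :=
    Finset.sum_congr rfl fun c _ => by
      rw [← ENNReal.rpow_mul, mul_one_div, div_self (ne_of_gt h0), ENNReal.rpow_one]
  have e2 : ∑ c ∈ s, ((v c) ^ (1-α)) ^ (1/(1-α)) = ∑ c ∈ s, v c :=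
    Finset.sum_congr rfl fun c _ => by
      rw [← ENNReal.rpow_mul, mul_one_div,
        div_self (ne_of_gt (by linarith : (0:ℝ) < 1 - α)), ENNReal.rpow_one]
  calc ∑ c ∈ s, (u c) ^ α * (v c) ^ (1 - α)
      ≤ (∑ c ∈ s, ((u c) ^ α) ^ (1/α)) ^ (1/(1/α)) *
        (∑ c ∈ s, ((v c) ^ (1-α)) ^ (1/(1-α))) ^ (1/(1/(1-α))) :=
        ENNReal.inner_le_Lp_mul_Lq s _ _ hconj
    _ = (∑ c ∈ s, u c) ^ α * (∑ c ∈ s, v c) ^ (1 - α) := by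
        rw [e1, e2, one_div_one_div, one_div_one_div]


section Core
open scoped Classical

variable {X : Type*} [MeasurableSpace X] {ι : Type*}

noncomputable def coreS (s : Finset ι) (Q : ι → Set X) (lam : ι → ℝ≥0∞) (x : X) : ℝ≥0∞ :=
  ∑ i ∈ s, (Q i).indicator (fun _ => lam i) x

noncomputable def coreg (s : Finset ι) (Q : ι → Set X) (lam : ι → ℝ≥0∞) (c : ι) (x : X) : ℝ≥0∞ :=
  ∑ j ∈ s.filter (fun j => Q j ⊆ Q c), (Q j).indicator (fun _ => lam j) x

noncomputable def coreL (s : Finset ι) (Q : ι → Set X) (lam : ι → ℝ≥0∞) (c : ι) : ℝ≥0∞ :=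
  ∑ j ∈ s.filter (fun j => Q c ⊆ Q j), lam j

noncomputable def coreA (s : Finset ι) (Q : ι → Set X) (lam : ι → ℝ≥0∞) (ω : Measure X)
    (c : ι) : ℝ≥0∞ :=
  ∑ j ∈ s.filter (fun j => Q j ⊆ Q c), lam j * ω (Q j)

variable {s : Finset ι} {Q : ι → Set X} {lam : ι → ℝ≥0∞} {ω : Measure X}

lemma ind_sum_eq (w : Finset ι) (F : ι → X → ℝ≥0∞) (x : X) :
    ∑ i ∈ w, (Q i).indicator (F i) x = ∑ i ∈ w.filter (fun i => x ∈ Q i), F i x := by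
  rw [Finset.sum_filter]
  exact Finset.sum_congr rfl fun i _ => Set.indicator_apply _ _ _

lemma coreg_meas (hQm : ∀ i, MeasurableSet (Q i)) (c : ι) :
    Measurable (coreg s Q lam c) :=
  Finset.measurable_sum _ fun j _ => measurable_const.indicator (hQm j)

lemma coreS_meas (hQm : ∀ i, MeasurableSet (Q i)) :
    Measurable (coreS s Q lam : X → ℝ≥0∞) :=
  Finset.measurable_sum _ fun j _ => measurable_const.indicator (hQm j)

lemma sum_swap_filter (s : Finset ι) (P : ι → ι → Prop) [∀ i c, Decidable (P i c)]
    (a b : ι → ℝ≥0∞) :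
    ∑ c ∈ s, a c * ∑ i ∈ s.filter (fun i => P i c), b i =
    ∑ i ∈ s, b i * ∑ c ∈ s.filter (fun c => P i c), a c := by
  calc ∑ c ∈ s, a c * ∑ i ∈ s.filter (fun i => P i c), b i
      = ∑ c ∈ s, ∑ i ∈ s, if P i c then a c * b i else 0 := by
        refine Finset.sum_congr rfl fun c _ => ?_
        rw [Finset.mul_sum, Finset.sum_filter]
    _ = ∑ i ∈ s, ∑ c ∈ s, if P i c then a c * b i else 0 := Finset.sum_comm
    _ = ∑ i ∈ s, b i * ∑ c ∈ s.filter (fun c => P i c), a c := by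
        refine Finset.sum_congr rfl fun i _ => ?_
        rw [Finset.mul_sum, Finset.sum_filter]
        refine Finset.sum_congr rfl fun c _ => ?_
        split
        · exact mul_comm _ _
        · rfl

lemma core_ptwise
    (hnest : ∀ i ∈ s, ∀ j ∈ s, ∀ x, x ∈ Q i → x ∈ Q j → Q i ⊆ Q j ∨ Q j ⊆ Q i)
    (u : Finset ι) (hu : u ⊆ s) {t : ℝ} (ht : 1 ≤ t) (x : X) :
    (∑ i ∈ u, (Q i).indicator (fun _ => lam i) x) ^ t ≤
      ENNReal.ofReal t *
        ∑ i ∈ u, (Q i).indicator (fun y => lam i * (coreg s Q lam i y) ^ (t - 1)) x := by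
  classical
  set ux := u.filter (fun i => x ∈ Q i) with hux
  have htot : ∀ i ∈ ux, ∀ j ∈ ux, Q i ⊆ Q j ∨ Q j ⊆ Q i := by
    intro i hi j hj
    rw [hux, Finset.mem_filter] at hi hj
    exact hnest i (hu hi.1) j (hu hj.1) x hi.2 hj.2
  have htrans : ∀ i ∈ ux, ∀ j ∈ ux, ∀ k ∈ ux, Q i ⊆ Q j → Q j ⊆ Q k → Q i ⊆ Q k :=
    fun i _ j _ k _ h1 h2 => h1.trans h2
  have key := chain_pow_le (fun a b => Q a ⊆ Q b) ht ux htot htrans lam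
  rw [ind_sum_eq u (fun i _ => lam i) x,
    ind_sum_eq u (fun i y => lam i * (coreg s Q lam i y) ^ (t - 1)) x]
  refine le_trans key ?_
  gcongr with i hi
  · have hsub : ux.filter (fun j => Q j ⊆ Q i) ⊆
        (s.filter (fun j => Q j ⊆ Q i)).filter (fun j => x ∈ Q j) := by
      intro j hj
      simp only [hux, Finset.mem_filter] at hj ⊢
      exact ⟨⟨hu hj.1.1, hj.2⟩, hj.1.2⟩
    calc ∑ j ∈ ux.filter (fun j => Q j ⊆ Q i), lam j
        ≤ ∑ j ∈ (s.filter (fun j => Q j ⊆ Q i)).filter (fun j => x ∈ Q j), lam j :=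
          Finset.sum_le_sum_of_subset hsub
      _ = coreg s Q lam i x := by
          rw [coreg, ind_sum_eq (s.filter (fun j => Q j ⊆ Q i)) (fun j _ => lam j) x]

-- core_claim
lemma core_claim (hQm : ∀ i, MeasurableSet (Q i))
    (hnest : ∀ i ∈ s, ∀ j ∈ s, ∀ x, x ∈ Q i → x ∈ Q j → Q i ⊆ Q j ∨ Q j ⊆ Q i)
    {q : ℝ} (hq1 : 1 < q) :
    ∀ m : ℕ, 1 ≤ m → (m : ℝ) ≤ q →
    ∫⁻ x, coreS s Q lam x ^ q ∂ω ≤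
      (∏ j ∈ Finset.range m, ENNReal.ofReal (q - j)) *
        ∑ c ∈ s, lam c * coreL s Q lam c ^ (m - 1) *
          ∫⁻ x in Q c, coreg s Q lam c x ^ (q - m) ∂ω := by
  classical
  intro m hm
  induction m, hm using Nat.le_induction with
  | base =>
    intro _
    have hmono : ∀ x : X, coreS s Q lam x ^ q ≤
        ENNReal.ofReal q *
          ∑ i ∈ s, (Q i).indicator (fun y => lam i * (coreg s Q lam i y) ^ (q - 1)) x :=
      fun x => core_ptwise hnest s (le_refl s) (le_of_lt hq1) x
    calc ∫⁻ x, coreS s Q lam x ^ q ∂ω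
        ≤ ∫⁻ x, ENNReal.ofReal q *
            ∑ i ∈ s, (Q i).indicator (fun y => lam i * (coreg s Q lam i y) ^ (q - 1)) x ∂ω :=
          lintegral_mono hmono
      _ = ENNReal.ofReal q * ∑ i ∈ s, ∫⁻ x,
            (Q i).indicator (fun y => lam i * (coreg s Q lam i y) ^ (q - 1)) x ∂ω := by
          rw [lintegral_const_mul _ (Finset.measurable_sum _ fun i _ =>
            ((((coreg_meas hQm i).pow_const _).const_mul _).indicator (hQm i))),
            lintegral_finset_sum _ fun i _ =>
            ((((coreg_meas hQm i).pow_const _).const_mul _).indicator (hQm i))]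
      _ = (∏ j ∈ Finset.range 1, ENNReal.ofReal (q - j)) *
            ∑ c ∈ s, lam c * coreL s Q lam c ^ (1 - 1) *
              ∫⁻ x in Q c, coreg s Q lam c x ^ (q - (1:ℕ)) ∂ω := by
          simp only [Finset.prod_range_one, Nat.cast_zero, Nat.cast_one, sub_zero]
          congr 1
          refine Finset.sum_congr rfl fun c _ => ?_
          rw [lintegral_indicator (hQm c),
            lintegral_const_mul _ ((coreg_meas hQm c).pow_const _)]
          norm_num
  | succ m hm ih =>
    intro hmq1
    have hmq : (m : ℝ) ≤ q := by push_cast at hmq1 ⊢; linarith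
    have hqm1 : (1 : ℝ) ≤ q - m := by push_cast at hmq1; linarith
    have hloc : ∀ c ∈ s, ∫⁻ x in Q c, coreg s Q lam c x ^ (q - m) ∂ω ≤
        ENNReal.ofReal (q - m) * ∑ i ∈ s.filter (fun i => Q i ⊆ Q c),
          lam i * ∫⁻ x in Q i, coreg s Q lam i x ^ (q - (m + 1 : ℕ)) ∂ω := by
      intro c hc
      have hpt : ∀ x : X, coreg s Q lam c x ^ (q - m) ≤
          ENNReal.ofReal (q - m) * ∑ i ∈ s.filter (fun i => Q i ⊆ Q c),
            (Q i).indicator (fun y => lam i * (coreg s Q lam i y) ^ (q - m - 1)) x :=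
        fun x => core_ptwise hnest (s.filter (fun i => Q i ⊆ Q c))
          (Finset.filter_subset _ s) hqm1 x
      calc ∫⁻ x in Q c, coreg s Q lam c x ^ (q - m) ∂ω
          ≤ ∫⁻ x in Q c, ENNReal.ofReal (q - m) *
              ∑ i ∈ s.filter (fun i => Q i ⊆ Q c),
                (Q i).indicator (fun y => lam i * (coreg s Q lam i y) ^ (q - m - 1)) x ∂ω :=
            lintegral_mono fun x => hpt x
        _ = ENNReal.ofReal (q - m) * ∑ i ∈ s.filter (fun i => Q i ⊆ Q c), ∫⁻ x in Q c,
              (Q i).indicator (fun y => lam i * (coreg s Q lam i y) ^ (q - m - 1)) x ∂ω := by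
            rw [lintegral_const_mul _ (Finset.measurable_sum _ fun i _ =>
              ((((coreg_meas hQm i).pow_const _).const_mul _).indicator (hQm i))),
              lintegral_finset_sum _ fun i _ =>
              ((((coreg_meas hQm i).pow_const _).const_mul _).indicator (hQm i))]
        _ = ENNReal.ofReal (q - m) * ∑ i ∈ s.filter (fun i => Q i ⊆ Q c),
              lam i * ∫⁻ x in Q i, coreg s Q lam i x ^ (q - (m + 1 : ℕ)) ∂ω := by
            congr 1
            refine Finset.sum_congr rfl fun i hi => ?_
            have hIC : Q i ⊆ Q c := (Finset.mem_filter.mp hi).2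
            rw [lintegral_indicator (hQm i), Measure.restrict_restrict (hQm i),
              Set.inter_eq_self_of_subset_left hIC,
              lintegral_const_mul _ ((coreg_meas hQm i).pow_const _)]
            congr 2
            push_cast
            ring_nf
    calc ∫⁻ x, coreS s Q lam x ^ q ∂ω
        ≤ (∏ j ∈ Finset.range m, ENNReal.ofReal (q - j)) *
            ∑ c ∈ s, lam c * coreL s Q lam c ^ (m - 1) *
              ∫⁻ x in Q c, coreg s Q lam c x ^ (q - m) ∂ω := ih hmq
      _ ≤ (∏ j ∈ Finset.range m, ENNReal.ofReal (q - j)) *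
            ∑ c ∈ s, lam c * coreL s Q lam c ^ (m - 1) *
              (ENNReal.ofReal (q - m) * ∑ i ∈ s.filter (fun i => Q i ⊆ Q c),
                lam i * ∫⁻ x in Q i, coreg s Q lam i x ^ (q - (m + 1 : ℕ)) ∂ω) := by
          gcongr (∏ j ∈ Finset.range m, ENNReal.ofReal (q - j)) * ∑ c ∈ s, ?_ with c hc
          exact mul_le_mul_right (hloc c hc) _
      _ = (∏ j ∈ Finset.range m, ENNReal.ofReal (q - j)) * (ENNReal.ofReal (q - m) *
            ∑ i ∈ s, (lam i * ∫⁻ x in Q i, coreg s Q lam i x ^ (q - (m + 1 : ℕ)) ∂ω) *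
              ∑ c ∈ s.filter (fun c => Q i ⊆ Q c), lam c * coreL s Q lam c ^ (m - 1)) := by
          congr 1
          calc ∑ c ∈ s, lam c * coreL s Q lam c ^ (m - 1) *
                (ENNReal.ofReal (q - m) * ∑ i ∈ s.filter (fun i => Q i ⊆ Q c),
                  lam i * ∫⁻ x in Q i, coreg s Q lam i x ^ (q - (m + 1 : ℕ)) ∂ω)
              = ENNReal.ofReal (q - m) * ∑ c ∈ s,
                  (lam c * coreL s Q lam c ^ (m - 1)) *
                  ∑ i ∈ s.filter (fun i => Q i ⊆ Q c),
                    lam i * ∫⁻ x in Q i, coreg s Q lam i x ^ (q - (m + 1 : ℕ)) ∂ω := by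
                rw [Finset.mul_sum]
                refine Finset.sum_congr rfl fun c _ => by ring
            _ = ENNReal.ofReal (q - m) *
                  ∑ i ∈ s, (lam i * ∫⁻ x in Q i, coreg s Q lam i x ^ (q - (m + 1 : ℕ)) ∂ω) *
                    ∑ c ∈ s.filter (fun c => Q i ⊆ Q c), lam c * coreL s Q lam c ^ (m - 1) := by
                rw [sum_swap_filter s (fun i c => Q i ⊆ Q c)
                  (fun c => lam c * coreL s Q lam c ^ (m - 1))
                  (fun i => lam i * ∫⁻ x in Q i, coreg s Q lam i x ^ (q - (m + 1 : ℕ)) ∂ω)]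
      _ ≤ (∏ j ∈ Finset.range m, ENNReal.ofReal (q - j)) * (ENNReal.ofReal (q - m) *
            ∑ i ∈ s, lam i * coreL s Q lam i ^ m *
              ∫⁻ x in Q i, coreg s Q lam i x ^ (q - (m + 1 : ℕ)) ∂ω) := by
          gcongr _ * (_ * ∑ i ∈ s, ?_) with i hi
          have h1 : ∑ c ∈ s.filter (fun c => Q i ⊆ Q c), lam c * coreL s Q lam c ^ (m - 1) ≤
              coreL s Q lam i ^ (m - 1) * coreL s Q lam i := by
            calc ∑ c ∈ s.filter (fun c => Q i ⊆ Q c), lam c * coreL s Q lam c ^ (m - 1)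
                ≤ ∑ c ∈ s.filter (fun c => Q i ⊆ Q c), lam c * coreL s Q lam i ^ (m - 1) := by
                  refine Finset.sum_le_sum fun c hc => ?_
                  have hic : Q i ⊆ Q c := (Finset.mem_filter.mp hc).2
                  refine mul_le_mul_right (pow_le_pow_left' ?_ _) _
                  refine Finset.sum_le_sum_of_subset ?_
                  intro j hj
                  simp only [Finset.mem_filter] at hj ⊢
                  exact ⟨hj.1, hic.trans hj.2⟩
              _ = coreL s Q lam i ^ (m - 1) * coreL s Q lam i := by
                  rw [← Finset.sum_mul, mul_comm]
                  rfl
          calc (lam i * ∫⁻ x in Q i, coreg s Q lam i x ^ (q - (m + 1 : ℕ)) ∂ω) *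
                ∑ c ∈ s.filter (fun c => Q i ⊆ Q c), lam c * coreL s Q lam c ^ (m - 1)
              ≤ (lam i * ∫⁻ x in Q i, coreg s Q lam i x ^ (q - (m + 1 : ℕ)) ∂ω) *
                (coreL s Q lam i ^ (m - 1) * coreL s Q lam i) := mul_le_mul_right h1 _
            _ = lam i * coreL s Q lam i ^ m *
                ∫⁻ x in Q i, coreg s Q lam i x ^ (q - (m + 1 : ℕ)) ∂ω := by
                have : coreL s Q lam i ^ (m - 1) * coreL s Q lam i = coreL s Q lam i ^ m := by
                  rw [← pow_succ]
                  congr 1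
                  omega
                rw [this]; ring
      _ = (∏ j ∈ Finset.range (m + 1), ENNReal.ofReal (q - j)) *
            ∑ c ∈ s, lam c * coreL s Q lam c ^ (m + 1 - 1) *
              ∫⁻ x in Q c, coreg s Q lam c x ^ (q - (m + 1 : ℕ)) ∂ω := by
          rw [Finset.prod_range_succ, mul_assoc]
          norm_num

lemma ennreal_self_mul_rpow {q : ℝ} (hq1 : 1 < q) (a : ℝ≥0∞) : a * a ^ (q - 1) = a ^ q := by
  by_cases ha : a = 0
  · rw [ha, ENNReal.zero_rpow_of_pos (by linarith), ENNReal.zero_rpow_of_pos (by linarith),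
      mul_zero]
  by_cases ha' : a = ∞
  · rw [ha', ENNReal.top_rpow_of_pos (by linarith), ENNReal.top_rpow_of_pos (by linarith),
      ENNReal.top_mul_top]
  · nth_rewrite 1 [← ENNReal.rpow_one a]
    rw [← ENNReal.rpow_add _ _ ha ha']
    norm_num

lemma core_T_lt_top (hQm : ∀ i, MeasurableSet (Q i)) (hlam : ∀ i ∈ s, lam i ≠ ∞)
    (hωfin : ∀ i, ω (Q i) ≠ ∞) {q : ℝ} (hq0 : 0 < q) :
    ∫⁻ x, coreS s Q lam x ^ q ∂ω < ∞ := by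
  classical
  set C : ℝ≥0∞ := ∑ i ∈ s, lam i with hC
  set U : Set X := ⋃ i ∈ s, Q i with hU
  have hUm : MeasurableSet U := Finset.measurableSet_biUnion s fun i _ => hQm i
  have hpt : ∀ x, coreS s Q lam x ^ q ≤ U.indicator (fun _ => C ^ q) x := by
    intro x
    by_cases hx : x ∈ U
    · rw [Set.indicator_of_mem hx]
      refine ENNReal.rpow_le_rpow ?_ (le_of_lt hq0)
      exact Finset.sum_le_sum fun i _ => Set.indicator_apply_le fun _ => le_rfl
    · rw [Set.indicator_of_notMem hx]
      have : coreS s Q lam x = 0 := by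
        rw [coreS]
        refine Finset.sum_eq_zero fun i hi => ?_
        refine Set.indicator_of_notMem (fun hxi => hx ?_) _
        exact Set.mem_biUnion hi hxi
      rw [this, ENNReal.zero_rpow_of_pos hq0]
  calc ∫⁻ x, coreS s Q lam x ^ q ∂ω ≤ ∫⁻ x, U.indicator (fun _ => C ^ q) x ∂ω :=
        lintegral_mono hpt
    _ = C ^ q * ω U := by rw [lintegral_indicator hUm, setLIntegral_const]
    _ < ∞ := by
        apply ENNReal.mul_lt_top
        · exact ENNReal.rpow_lt_top_of_nonneg (le_of_lt hq0)
            (ENNReal.sum_lt_top.mpr fun i hi => lt_top_iff_ne_top.mpr (hlam i hi)).ne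
        · exact lt_of_le_of_lt (measure_biUnion_finset_le s Q)
            (ENNReal.sum_lt_top.mpr fun i _ => lt_top_iff_ne_top.mpr (hωfin i))

lemma core_sumv_le_T (hQm : ∀ i, MeasurableSet (Q i)) {q : ℝ} (hq1 : 1 < q) :
    ∑ c ∈ s, lam c * ω (Q c) * coreL s Q lam c ^ (q - 1) ≤
      ∫⁻ x, coreS s Q lam x ^ q ∂ω := by
  classical
  have hstep : ∀ c ∈ s, ω (Q c) * coreL s Q lam c ^ (q - 1) ≤
      ∫⁻ x in Q c, coreS s Q lam x ^ (q - 1) ∂ω := by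
    intro c _
    have hLS : ∀ x ∈ Q c, coreL s Q lam c ≤ coreS s Q lam x := by
      intro x hx
      rw [coreL, coreS]
      calc ∑ j ∈ s.filter (fun j => Q c ⊆ Q j), lam j
          = ∑ j ∈ s.filter (fun j => Q c ⊆ Q j), (Q j).indicator (fun _ => lam j) x := by
            refine Finset.sum_congr rfl fun j hj => ?_
            rw [Set.indicator_of_mem ((Finset.mem_filter.mp hj).2 hx)]
        _ ≤ ∑ j ∈ s, (Q j).indicator (fun _ => lam j) x :=
            Finset.sum_le_sum_of_subset (Finset.filter_subset _ s)
    calc ω (Q c) * coreL s Q lam c ^ (q - 1)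
        = ∫⁻ _ in Q c, coreL s Q lam c ^ (q - 1) ∂ω := by rw [setLIntegral_const, mul_comm]
      _ ≤ ∫⁻ x in Q c, coreS s Q lam x ^ (q - 1) ∂ω :=
          setLIntegral_mono ((coreS_meas hQm).pow_const _)
            (fun x hx => ENNReal.rpow_le_rpow (hLS x hx) (by linarith))
  calc ∑ c ∈ s, lam c * ω (Q c) * coreL s Q lam c ^ (q - 1)
      ≤ ∑ c ∈ s, lam c * ∫⁻ x in Q c, coreS s Q lam x ^ (q - 1) ∂ω := by
        refine Finset.sum_le_sum fun c hc => ?_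
        rw [mul_assoc]
        exact mul_le_mul_right (hstep c hc) _
    _ = ∑ c ∈ s, ∫⁻ x, (Q c).indicator (fun y => lam c * coreS s Q lam y ^ (q - 1)) x ∂ω := by
        refine Finset.sum_congr rfl fun c _ => ?_
        rw [lintegral_indicator (hQm c),
          lintegral_const_mul _ ((coreS_meas hQm).pow_const _)]
    _ = ∫⁻ x, ∑ c ∈ s, (Q c).indicator (fun y => lam c * coreS s Q lam y ^ (q - 1)) x ∂ω := by
        rw [lintegral_finset_sum _ fun c _ =>
          (((coreS_meas hQm).pow_const _).const_mul _).indicator (hQm c)]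
    _ = ∫⁻ x, coreS s Q lam x ^ q ∂ω := by
        refine lintegral_congr fun x => ?_
        have : ∑ c ∈ s, (Q c).indicator (fun y => lam c * coreS s Q lam y ^ (q - 1)) x =
            (∑ c ∈ s, (Q c).indicator (fun _ => lam c) x) * coreS s Q lam x ^ (q - 1) := by
          rw [Finset.sum_mul]
          refine Finset.sum_congr rfl fun c _ => ?_
          by_cases hx : x ∈ Q c
          · rw [Set.indicator_of_mem hx, Set.indicator_of_mem hx]
          · rw [Set.indicator_of_notMem hx, Set.indicator_of_notMem hx, zero_mul]
        rw [this, ← coreS, ennreal_self_mul_rpow hq1]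

lemma core_holder_loc (hQm : ∀ i, MeasurableSet (Q i)) (hωfin : ∀ i, ω (Q i) ≠ ∞)
    {β : ℝ} (hβ0 : 0 < β) (hβ1 : β ≤ 1) (c : ι) :
    ∫⁻ x in Q c, coreg s Q lam c x ^ β ∂ω ≤
      (coreA s Q lam ω c) ^ β * ω (Q c) ^ (1 - β) := by
  classical
  have hgint : ∫⁻ x in Q c, coreg s Q lam c x ∂ω = coreA s Q lam ω c := by
    rw [coreA]
    simp only [coreg]
    rw [lintegral_finset_sum _ fun j _ => measurable_const.indicator (hQm j)]
    refine Finset.sum_congr rfl fun j hj => ?_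
    have hJC : Q j ⊆ Q c := (Finset.mem_filter.mp hj).2
    rw [lintegral_indicator (hQm j), Measure.restrict_restrict (hQm j),
      Set.inter_eq_self_of_subset_left hJC, setLIntegral_const, mul_comm]
  rcases eq_or_lt_of_le hβ1 with hβeq | hβlt
  · subst hβeq
    simp only [ENNReal.rpow_one, sub_self, ENNReal.rpow_zero, mul_one]
    rw [← hgint]
  · have hconj : (1/β).HolderConjugate (1/(1-β)) := by
      refine Real.holderConjugate_iff.mpr ⟨?_, ?_⟩
      · rw [lt_div_iff₀ hβ0]; linarith
      · rw [one_div, one_div, inv_inv, inv_inv]; ring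
    have hmeas : AEMeasurable (fun x => coreg s Q lam c x ^ β) (ω.restrict (Q c)) :=
      ((coreg_meas hQm c).pow_const _).aemeasurable
    have key := ENNReal.lintegral_mul_le_Lp_mul_Lq (ω.restrict (Q c)) hconj hmeas
      (aemeasurable_const : AEMeasurable (fun _ => (1:ℝ≥0∞)) _)
    simp only [Pi.mul_apply, mul_one, ENNReal.one_rpow] at key
    calc ∫⁻ x in Q c, coreg s Q lam c x ^ β ∂ω
        ≤ (∫⁻ x in Q c, (coreg s Q lam c x ^ β) ^ (1/β) ∂ω) ^ (1/(1/β)) *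
          (∫⁻ _ in Q c, (1:ℝ≥0∞) ∂ω) ^ (1/(1/(1-β))) := key
      _ = (coreA s Q lam ω c) ^ β * ω (Q c) ^ (1 - β) := by
          rw [one_div_one_div, one_div_one_div]
          congr 1
          · rw [← hgint]
            congr 1
            refine lintegral_congr fun x => ?_
            rw [← ENNReal.rpow_mul, mul_one_div, div_self (ne_of_gt hβ0), ENNReal.rpow_one]
          · rw [lintegral_one, Measure.restrict_apply_univ]

lemma ofReal_prod_range (f : ℕ → ℝ) (n : ℕ) (hf : ∀ j < n, 0 ≤ f j) :
    ∏ j ∈ Finset.range n, ENNReal.ofReal (f j) = ENNReal.ofReal (∏ j ∈ Finset.range n, f j) := by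
  induction n with
  | zero => simp
  | succ n ih =>
    have hprod : 0 ≤ ∏ j ∈ Finset.range n, f j :=
      Finset.prod_nonneg fun j hj => hf j (by simp at hj; omega)
    rw [Finset.prod_range_succ, Finset.prod_range_succ,
      ih (fun j hj => hf j (by omega)), ← ENNReal.ofReal_mul hprod]

lemma core_main (hQm : ∀ i, MeasurableSet (Q i))
    (hnest : ∀ i ∈ s, ∀ j ∈ s, ∀ x, x ∈ Q i → x ∈ Q j → Q i ⊆ Q j ∨ Q j ⊆ Q i)
    (hlam : ∀ i ∈ s, lam i ≠ ∞) (hωfin : ∀ i, ω (Q i) ≠ ∞)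
    {q : ℝ} (hq1 : 1 < q) :
    ∫⁻ x, coreS s Q lam x ^ q ∂ω ≤
      ENNReal.ofReal (covConst q) *
        ∑ c ∈ s, lam c * ω (Q c) * (coreA s Q lam ω c / ω (Q c)) ^ (q - 1) := by
  classical
  set k : ℕ := (⌈q - 2⌉).toNat with hk
  set β : ℝ := q - (k + 1 : ℕ) with hβ
  have hkq : (k : ℝ) < q - 1 := by
    rcases le_or_gt q 2 with h | h
    · have hk0 : k = 0 := by
        rw [hk, Int.toNat_eq_zero]
        exact Int.ceil_le.mpr (by push_cast; linarith)
      rw [hk0]; push_cast; linarith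
    · have h1 : (0:ℤ) ≤ ⌈q - 2⌉ := Int.ceil_nonneg (by linarith)
      have h2 : ((k:ℤ) : ℝ) = ((⌈q - 2⌉ : ℤ) : ℝ) := by rw [hk, Int.toNat_of_nonneg h1]
      have h3 : ((⌈q - 2⌉ : ℤ) : ℝ) < (q - 2) + 1 := Int.ceil_lt_add_one (q - 2)
      push_cast at h2 ⊢
      rw [h2]; linarith
  have hβ0 : 0 < β := by rw [hβ]; push_cast; linarith
  have hβ1 : β ≤ 1 := by
    have : (q - 2 : ℝ) ≤ k := by
      rcases le_or_gt q 2 with h | h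
      · have : (0:ℝ) ≤ (k:ℝ) := Nat.cast_nonneg k
        linarith
      · have h1 : (0:ℤ) ≤ ⌈q - 2⌉ := Int.ceil_nonneg (by linarith)
        have h2 : ((k:ℤ) : ℝ) = ((⌈q - 2⌉ : ℤ) : ℝ) := by rw [hk, Int.toNat_of_nonneg h1]
        have h3 := Int.le_ceil (q - 2)
        push_cast at h2 ⊢
        linarith
    rw [hβ]; push_cast; linarith
  set T : ℝ≥0∞ := ∫⁻ x, coreS s Q lam x ^ q ∂ω with hT
  set W : ℝ≥0∞ := ∑ c ∈ s, lam c * ω (Q c) * (coreA s Q lam ω c / ω (Q c)) ^ (q - 1) with hW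
  set D : ℝ≥0∞ := ∏ j ∈ Finset.range (k + 1), ENNReal.ofReal (q - j) with hD
  -- Step 1: the chain estimate
  have hclaim : T ≤ D * ∑ c ∈ s, lam c * coreL s Q lam c ^ k *
      ∫⁻ x in Q c, coreg s Q lam c x ^ β ∂ω := by
    have h := core_claim (ω := ω) (lam := lam) hQm hnest hq1 (k + 1) (by omega)
      (by push_cast; linarith)
    simp only [Nat.add_sub_cancel] at h
    rw [← hT, ← hD, ← hβ] at h
    exact h
  -- Step 2: local Hölder + comparison with W-terms
  have htermW : ∀ c ∈ s, ∫⁻ x in Q c, coreg s Q lam c x ^ β ∂ω ≤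
      ω (Q c) * (coreA s Q lam ω c / ω (Q c)) ^ β := by
    intro c hc
    refine le_trans (core_holder_loc hQm hωfin hβ0 hβ1 c) ?_
    by_cases hω0 : ω (Q c) = 0
    · have hA0 : coreA s Q lam ω c = 0 := by
        rw [coreA]
        refine Finset.sum_eq_zero fun j hj => ?_
        have : ω (Q j) = 0 :=
          le_antisymm (hω0 ▸ measure_mono (Finset.mem_filter.mp hj).2) (zero_le)
        rw [this, mul_zero]
      rw [hA0, ENNReal.zero_rpow_of_pos hβ0, zero_mul]
      exact zero_le
    · have hωβ0 : ω (Q c) ^ β ≠ 0 :=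
        (ENNReal.rpow_pos (pos_iff_ne_zero.mpr hω0) (hωfin c)).ne'
      have hωβtop : ω (Q c) ^ β ≠ ∞ :=
        (ENNReal.rpow_lt_top_of_nonneg (le_of_lt hβ0) (hωfin c)).ne
      have hωsum : ω (Q c) ^ β * ω (Q c) ^ (1 - β) = ω (Q c) := by
        rw [← ENNReal.rpow_add _ _ hω0 (hωfin c)]
        norm_num
      have h3 : ω (Q c) ^ (1 - β) = ω (Q c) / ω (Q c) ^ β :=
        (ENNReal.eq_div_iff hωβ0 hωβtop).mpr hωsum
      rw [ENNReal.div_rpow_of_nonneg _ _ (le_of_lt hβ0), h3]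
      rw [ENNReal.div_eq_inv_mul, ENNReal.div_eq_inv_mul]
      calc coreA s Q lam ω c ^ β * ((ω (Q c) ^ β)⁻¹ * ω (Q c))
          = ω (Q c) * ((ω (Q c) ^ β)⁻¹ * coreA s Q lam ω c ^ β) := by ring
        _ ≤ ω (Q c) * ((ω (Q c) ^ β)⁻¹ * coreA s Q lam ω c ^ β) := le_rfl
  have hmain : T ≤ D * ∑ c ∈ s, lam c * coreL s Q lam c ^ k *
      (ω (Q c) * (coreA s Q lam ω c / ω (Q c)) ^ β) := by
    refine le_trans hclaim ?_
    refine mul_le_mul_right (Finset.sum_le_sum fun c hc => ?_) _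
    exact mul_le_mul_right (htermW c hc) _
  -- Case k = 0
  by_cases hk0 : k = 0
  · have hq2 : q ≤ 2 := by
      by_contra hcon
      push_neg at hcon
      have hcl : (0:ℤ) < ⌈q - 2⌉ := Int.lt_ceil.mpr (by push_cast; linarith)
      have : k ≠ 0 := by rw [hk]; omega
      exact this hk0
    have hcov : covConst q = q := by rw [covConst, if_pos hq2]
    have hβq : β = q - 1 := by rw [hβ, hk0]; push_cast; ring
    have hDq : D = ENNReal.ofReal q := by rw [hD, hk0]; simp
    refine le_trans hmain (le_of_eq ?_)
    rw [hcov, hDq, hW]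
    congr 1
    refine Finset.sum_congr rfl fun c _ => ?_
    rw [hk0, hβq]
    ring
  -- Case k ≥ 1
  · have hk1 : 1 ≤ k := by omega
    have hq2 : 2 < q := by
      by_contra hcon
      push_neg at hcon
      have : k = 0 := by
        rw [hk, Int.toNat_eq_zero]
        exact Int.ceil_le.mpr (by push_cast; linarith)
      omega
    set α : ℝ := β / (q - 1) with hα
    have hα0 : 0 < α := div_pos hβ0 (by linarith)
    have hα1 : α < 1 := by
      rw [hα, div_lt_one (by linarith : (0:ℝ) < q - 1)]
      rw [hβ]
      push_cast
      have : (1:ℝ) ≤ (k:ℝ) := by exact_mod_cast hk1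
      linarith
    set u : ι → ℝ≥0∞ := fun c => lam c * ω (Q c) * (coreA s Q lam ω c / ω (Q c)) ^ (q - 1)
      with hu
    set v : ι → ℝ≥0∞ := fun c => lam c * ω (Q c) * coreL s Q lam c ^ (q - 1) with hv
    have hterm2 : ∀ c ∈ s, lam c * coreL s Q lam c ^ k *
        (ω (Q c) * (coreA s Q lam ω c / ω (Q c)) ^ β) = u c ^ α * v c ^ (1 - α) := by
      intro c _
      rw [hu, hv]
      simp only []
      rw [ENNReal.mul_rpow_of_nonneg _ _ (le_of_lt hα0),
        ENNReal.mul_rpow_of_nonneg _ _ (by linarith : (0:ℝ) ≤ 1 - α)]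
      rw [← ENNReal.rpow_mul, ← ENNReal.rpow_mul]
      have hne : q - 1 ≠ 0 := by linarith
      have e1 : (q - 1) * α = β := by
        rw [hα]; exact mul_div_cancel₀ β hne
      have e2 : (q - 1) * (1 - α) = (k : ℝ) := by
        rw [hα, mul_sub, mul_one, mul_div_cancel₀ β hne, hβ]
        push_cast
        ring
      rw [e1, e2, ENNReal.rpow_natCast]
      have e3 : (lam c * ω (Q c)) ^ α * (lam c * ω (Q c)) ^ (1 - α) = lam c * ω (Q c) := by
        rw [← ENNReal.rpow_add_of_nonneg _ _ (le_of_lt hα0) (by linarith)]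
        norm_num
      calc lam c * coreL s Q lam c ^ k * (ω (Q c) * (coreA s Q lam ω c / ω (Q c)) ^ β)
          = (lam c * ω (Q c)) * ((coreA s Q lam ω c / ω (Q c)) ^ β * coreL s Q lam c ^ k) := by
            ring
        _ = ((lam c * ω (Q c)) ^ α * (lam c * ω (Q c)) ^ (1 - α)) *
            ((coreA s Q lam ω c / ω (Q c)) ^ β * coreL s Q lam c ^ k) := by rw [e3]
        _ = (lam c * ω (Q c)) ^ α * (coreA s Q lam ω c / ω (Q c)) ^ β *
            ((lam c * ω (Q c)) ^ (1 - α) * coreL s Q lam c ^ k) := by ring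
    have hsum2 : ∑ c ∈ s, lam c * coreL s Q lam c ^ k *
        (ω (Q c) * (coreA s Q lam ω c / ω (Q c)) ^ β) ≤ W ^ α * T ^ (1 - α) := by
      calc ∑ c ∈ s, lam c * coreL s Q lam c ^ k *
            (ω (Q c) * (coreA s Q lam ω c / ω (Q c)) ^ β)
          = ∑ c ∈ s, u c ^ α * v c ^ (1 - α) :=
            Finset.sum_congr rfl fun c hc => hterm2 c hc
        _ ≤ (∑ c ∈ s, u c) ^ α * (∑ c ∈ s, v c) ^ (1 - α) := finset_holder s u v hα0 hα1
        _ ≤ W ^ α * T ^ (1 - α) := by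
            refine mul_le_mul' (le_of_eq (by rw [hW, hu])) ?_
            refine ENNReal.rpow_le_rpow ?_ (by linarith)
            exact core_sumv_le_T hQm hq1
    have hboot : T ≤ D * (W ^ α * T ^ (1 - α)) :=
      le_trans hmain (mul_le_mul_right hsum2 _)
    -- bootstrap
    by_cases hT0 : T = 0
    · rw [hT0]; exact zero_le
    · have hTfin : T ≠ ∞ :=
        (core_T_lt_top hQm hlam hωfin (by linarith : (0:ℝ) < q)).ne
      have hTα0 : T ^ (1 - α) ≠ 0 :=
        (ENNReal.rpow_pos (pos_iff_ne_zero.mpr hT0) hTfin).ne'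
      have hTαtop : T ^ (1 - α) ≠ ∞ :=
        (ENNReal.rpow_lt_top_of_nonneg (by linarith) hTfin).ne
      have hcancel : T ^ α ≤ D * W ^ α := by
        rw [← ENNReal.mul_le_mul_iff_left hTα0 hTαtop,
          ← ENNReal.rpow_add_of_nonneg _ _ (le_of_lt hα0) (by linarith)]
        norm_num
        calc T ≤ D * (W ^ α * T ^ (1 - α)) := hboot
          _ = D * W ^ α * T ^ (1 - α) := by ring
      have hfinal : T ≤ (D * W ^ α) ^ (1/α) := by
        have := ENNReal.rpow_le_rpow hcancel (le_of_lt (one_div_pos.mpr hα0))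
        rwa [← ENNReal.rpow_mul, mul_one_div, div_self (ne_of_gt hα0),
          ENNReal.rpow_one] at this
      refine le_trans hfinal (le_of_eq ?_)
      rw [ENNReal.mul_rpow_of_nonneg _ _ (le_of_lt (one_div_pos.mpr hα0)),
        ← ENNReal.rpow_mul, mul_one_div, div_self (ne_of_gt hα0), ENNReal.rpow_one]
      congr 1
      -- D ^ (1/α) = ofReal (covConst q)
      have hprod : D = ENNReal.ofReal (∏ j ∈ Finset.range (k + 1), (q - j)) := by
        rw [hD]
        exact ofReal_prod_range (fun j => q - j) (k + 1) fun j hj => by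
          show (0:ℝ) ≤ q - (j:ℝ)
          have hjk : (j:ℝ) ≤ k := by exact_mod_cast Nat.lt_succ_iff.mp hj
          linarith [hkq]
      have hP0 : 0 < ∏ j ∈ Finset.range (k + 1), (q - (j:ℝ)) := by
        refine Finset.prod_pos fun j hj => ?_
        have : (j:ℝ) ≤ k := by exact_mod_cast Nat.lt_succ_iff.mp (Finset.mem_range.mp hj)
        linarith
      rw [hprod, ENNReal.ofReal_rpow_of_pos hP0]
      congr 1
      rw [covConst, if_neg (by linarith : ¬ q ≤ 2)]
      rw [← hk]
      congr 1
      rw [hα, hβ]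
      push_cast
      rw [one_div_div]
      ring_nf

lemma covConst_pos {q : ℝ} (hq : 1 < q) : 0 < covConst q := by
  rw [covConst]
  split
  · linarith
  · rename_i h
    push_neg at h
    apply Real.rpow_pos_of_pos
    refine Finset.prod_pos fun j hj => ?_
    have h1 : (j:ℝ) ≤ ((⌈q - 2⌉).toNat : ℝ) := by
      exact_mod_cast Nat.lt_succ_iff.mp (Finset.mem_range.mp hj)
    have h2 : (((⌈q - 2⌉).toNat : ℕ) : ℝ) < q - 1 := by
      have h1' : (0:ℤ) ≤ ⌈q - 2⌉ := Int.ceil_nonneg (by linarith)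
      have h2' : (((⌈q - 2⌉).toNat : ℤ) : ℝ) = ((⌈q - 2⌉ : ℤ) : ℝ) := by
        rw [Int.toNat_of_nonneg h1']
      have h3' : ((⌈q - 2⌉ : ℤ) : ℝ) < (q - 2) + 1 := Int.ceil_lt_add_one (q - 2)
      push_cast at h2' ⊢
      rw [h2']; linarith
    linarith

end Core

theorem principal_cube_wolff_estimate (n : ℕ) (σ ω : Measure (Fin n → ℝ))
    [IsLocallyFiniteMeasure σ] [IsLocallyFiniteMeasure ω]
    (p q r : ℝ) (hq : 1 < q) (hqp : q < p) (hr : 1 / q = 1 / r + 1 / p)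
    (K : ℤ × (Fin n → ℤ) → ℝ≥0∞) (hKfin : (Function.support K).Finite)
    (F : Set (Fin n → ℝ)) (hF : IsDyadicCube n F)
    (E : Set (Fin n → ℝ)) (hEsub : E ⊆ F) (hEmeas : MeasurableSet E)
    (hcar : σ F ≤ 2 * σ E) :
    ((σ F ^ (1 / p))⁻¹ *
        (∫⁻ x in F, (∑' P : {P : ℤ × (Fin n → ℤ) // cube n P ⊆ F},
          (cube n (P : ℤ × (Fin n → ℤ))).indicator
            (fun _ => K P * σ (cube n (P : ℤ × (Fin n → ℤ)))) x) ^ q ∂ω) ^ (1 / q)) ^ r ≤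
      2 * ENNReal.ofReal (covConst q) ^ (r / q) *
        ∫⁻ x in E, dyadicMaximal σ (wolffPot n K ω σ q) x ^ (r / q) ∂σ := by
  classical
  obtain ⟨iF, kF, hFeq⟩ := hF
  have hq0 : (0:ℝ) < q := by linarith
  have hp0 : (0:ℝ) < p := by linarith
  have hr0 : (0:ℝ) < r := by
    have h1 : (0:ℝ) < 1/q - 1/p := by
      rw [sub_pos]
      exact one_div_lt_one_div_of_lt hq0 hqp
    have h2 : (0:ℝ) < 1/r := by rw [hr] at h1; linarith
    exact one_div_pos.mp h2
  have hrq0 : (0:ℝ) < r / q := div_pos hr0 hq0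
  have hrexp : 1 - r/q = -(r/p) := by
    have h1 : r * (1/q) = r * (1/r) + r * (1/p) := by rw [hr, mul_add]
    rw [mul_one_div, mul_one_div, mul_one_div, div_self (ne_of_gt hr0)] at h1
    linarith
  set lam : (ℤ × (Fin n → ℤ)) → ℝ≥0∞ := fun P => K P * σ (cube n P) with hlamdef
  have hQm : ∀ P : ℤ × (Fin n → ℤ), MeasurableSet (cube n P) := measurableSet_cube n
  have hσfin : ∀ P : ℤ × (Fin n → ℤ), σ (cube n P) ≠ ∞ := fun P => (measure_cube_lt_top σ P).ne
  have hωfin : ∀ P : ℤ × (Fin n → ℤ), ω (cube n P) ≠ ∞ := fun P => (measure_cube_lt_top ω P).ne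
  have hσF : σ F ≠ ∞ := by rw [hFeq]; exact (measure_dyadicCube_lt_top σ iF kF).ne
  set G : (Fin n → ℝ) → ℝ≥0∞ := fun x => ∑' P : {P : ℤ × (Fin n → ℤ) // cube n P ⊆ F},
    (cube n (P : ℤ × (Fin n → ℤ))).indicator (fun _ => K P * σ (cube n (P : ℤ × (Fin n → ℤ)))) x with hG
  set I : ℝ≥0∞ := ∫⁻ x in F, G x ^ q ∂ω with hI
  set c : ℝ≥0∞ := ENNReal.ofReal (covConst q) with hc
  have hc0 : c ≠ 0 := by
    rw [hc]
    simp only [Ne, ENNReal.ofReal_eq_zero, not_le]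
    exact covConst_pos hq
  set J : ℝ≥0∞ := ∫⁻ y in F, wolffPot n K ω σ q y ∂σ with hJ
  set RI : ℝ≥0∞ := ∫⁻ x in E, dyadicMaximal σ (wolffPot n K ω σ q) x ^ (r / q) ∂σ with hRI
  -- case σ F = 0
  by_cases hσF0 : σ F = 0
  · have hG0 : ∀ x, G x = 0 := by
      intro x
      have : ∀ P : {P : ℤ × (Fin n → ℤ) // cube n P ⊆ F},
          (cube n (P : ℤ × (Fin n → ℤ))).indicator
            (fun _ => K P * σ (cube n (P : ℤ × (Fin n → ℤ)))) x = 0 := by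
        intro P
        have hσP : σ (cube n (P : ℤ × (Fin n → ℤ))) = 0 :=
          le_antisymm (hσF0 ▸ measure_mono P.2) (zero_le)
        simp [Set.indicator_apply, hσP]
      calc G x = ∑' P : {P : ℤ × (Fin n → ℤ) // cube n P ⊆ F},
          (cube n (P : ℤ × (Fin n → ℤ))).indicator
            (fun _ => K P * σ (cube n (P : ℤ × (Fin n → ℤ)))) x := by rw [hG]
        _ = 0 := by rw [tsum_congr this, tsum_zero]
    have hI0 : I = 0 := by
      rw [hI]
      have : ∀ x, G x ^ q = 0 := fun x => by
        rw [hG0 x, ENNReal.zero_rpow_of_pos hq0]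
      simp only [this, lintegral_zero, lintegral_const, zero_mul]
    rw [hI0, ENNReal.zero_rpow_of_pos (by positivity : (0:ℝ) < 1/q), mul_zero,
      ENNReal.zero_rpow_of_pos hr0]
    exact zero_le
  -- case there is a "bad" cube: RHS is infinite
  by_cases hbad : ∃ P : ℤ × (Fin n → ℤ), cube n P ⊆ F ∧ K P = ∞ ∧ σ (cube n P) ≠ 0 ∧ ω (cube n P) ≠ 0
  · obtain ⟨P₀, hP₀F, hKP₀, hσP₀, hωP₀⟩ := hbad
    have hWtop : ∀ y ∈ cube n P₀, wolffPot n K ω σ q y = ∞ := by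
      intro y hy
      have hA : (∑' P' : ℤ × (Fin n → ℤ), if cube n P' ⊆ cube n P₀ then
          K P' * ω (cube n P') * σ (cube n P') else 0) = ∞ := by
        refine eq_top_iff.mpr (le_trans ?_ (ENNReal.le_tsum P₀))
        rw [if_pos (subset_refl _), hKP₀]
        rw [ENNReal.top_mul hωP₀, ENNReal.top_mul hσP₀]
      refine eq_top_iff.mpr (le_trans ?_ (ENNReal.le_tsum P₀))
      rw [Set.indicator_of_mem hy, hA, ENNReal.top_div_of_ne_top (hωfin P₀), hKP₀,
        ENNReal.top_rpow_of_pos (by linarith : (0:ℝ) < q - 1),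
        ENNReal.top_mul hωP₀, ENNReal.top_mul (by simp)]
    have hJtop : J = ∞ := by
      rw [hJ]
      refine eq_top_iff.mpr (le_trans ?_ (lintegral_mono_set hP₀F))
      calc (⊤:ℝ≥0∞) = ⊤ * σ (cube n P₀) := by rw [ENNReal.top_mul hσP₀]
        _ = ∫⁻ _ in cube n P₀, ⊤ ∂σ := by rw [setLIntegral_const]
        _ ≤ ∫⁻ y in cube n P₀, wolffPot n K ω σ q y ∂σ :=
            setLIntegral_mono' (hQm P₀) fun y hy => by rw [hWtop y hy]
    have hMtop : ∀ x ∈ E, dyadicMaximal σ (wolffPot n K ω σ q) x = ∞ := by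
      intro x hx
      have hxF : x ∈ dyadicCube n iF kF := hFeq ▸ hEsub hx
      refine eq_top_iff.mpr (le_trans ?_ (le_iSup_of_le iF (le_iSup_of_le kF
        (le_iSup_of_le hxF le_rfl))))
      rw [← hFeq, ← hJ, hJtop]
      rw [ENNReal.top_div_of_ne_top hσF]
    have hRItop : RI = ∞ := by
      rw [hRI]
      have hσE : σ E ≠ 0 := by
        intro h
        apply hσP₀
        have h1 : σ F ≤ 0 := by rw [← mul_zero 2, ← h]; exact hcar
        have h2 : σ F = 0 := le_antisymm h1 (zero_le)
        exact le_antisymm (h2 ▸ measure_mono hP₀F) (zero_le)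
      refine eq_top_iff.mpr ?_
      calc (⊤:ℝ≥0∞) = ⊤ * σ E := by rw [ENNReal.top_mul hσE]
        _ = ∫⁻ _ in E, ⊤ ∂σ := by rw [setLIntegral_const]
        _ ≤ _ := setLIntegral_mono' hEmeas fun x hx => by
            rw [hMtop x hx, ENNReal.top_rpow_of_pos hrq0]
    rw [hRItop, ENNReal.mul_top]
    · exact le_top
    · refine mul_ne_zero (by norm_num) ?_
      exact (ENNReal.rpow_pos (pos_iff_ne_zero.mpr hc0) ENNReal.ofReal_ne_top).ne'
  -- main case
  push_neg at hbad
  set s : Finset (ℤ × (Fin n → ℤ)) := hKfin.toFinset.filter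
    (fun P => cube n P ⊆ F ∧ (K P ≠ ∞ ∨ σ (cube n P) = 0)) with hs
  set sbad : Finset (ℤ × (Fin n → ℤ)) := hKfin.toFinset.filter
    (fun P => cube n P ⊆ F ∧ K P = ∞ ∧ σ (cube n P) ≠ 0) with hsbad
  set N : Set (Fin n → ℝ) := ⋃ P ∈ sbad, cube n P with hN
  have hNnull : ω N = 0 := by
    rw [hN]
    refine le_antisymm (le_trans (measure_biUnion_finset_le sbad _) ?_) (zero_le)
    refine le_of_eq (Finset.sum_eq_zero fun P hP => ?_)
    rw [hsbad, Finset.mem_filter] at hP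
    exact hbad P hP.2.1 hP.2.2.1 hP.2.2.2
  have hnest : ∀ i ∈ s, ∀ j ∈ s, ∀ x, x ∈ cube n i → x ∈ cube n j →
      cube n i ⊆ cube n j ∨ cube n j ⊆ cube n i :=
    fun i _ j _ x hxi hxj => cube_nested hxi hxj
  have hlamfin : ∀ P ∈ s, lam P ≠ ∞ := by
    intro P hP
    rw [hs, Finset.mem_filter] at hP
    rcases hP.2.2 with h | h
    · exact ENNReal.mul_ne_top h (hσfin P)
    · rw [hlamdef]
      simp [h]
  have hGeq : ∀ x ∉ N, G x = coreS s (cube n) lam x := by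
    intro x hx
    have h0 : ∀ P : ℤ × (Fin n → ℤ), P ∉ hKfin.toFinset →
        ({P : ℤ × (Fin n → ℤ) | cube n P ⊆ F}).indicator
          (fun P => (cube n P).indicator (fun _ => K P * σ (cube n P)) x) P = 0 := by
      intro P hP
      have hK0 : K P = 0 := by
        by_contra h
        exact hP (hKfin.mem_toFinset.mpr h)
      simp [Set.indicator_apply, hK0]
    calc G x = ∑' P : ℤ × (Fin n → ℤ), ({P : ℤ × (Fin n → ℤ) | cube n P ⊆ F}).indicator
          (fun P => (cube n P).indicator (fun _ => K P * σ (cube n P)) x) P := by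
          rw [hG]
          exact tsum_subtype {P : ℤ × (Fin n → ℤ) | cube n P ⊆ F}
            (fun P => (cube n P).indicator (fun _ => K P * σ (cube n P)) x)
      _ = ∑ P ∈ hKfin.toFinset, ({P : ℤ × (Fin n → ℤ) | cube n P ⊆ F}).indicator
          (fun P => (cube n P).indicator (fun _ => K P * σ (cube n P)) x) P := tsum_eq_sum h0
      _ = ∑ P ∈ hKfin.toFinset.filter (fun P => cube n P ⊆ F),
          (cube n P).indicator (fun _ => K P * σ (cube n P)) x := by
          rw [Finset.sum_filter]
          refine Finset.sum_congr rfl fun P _ => ?_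
          rw [Set.indicator_apply]
          simp only [Set.mem_setOf_eq]
      _ = ∑ P ∈ s, (cube n P).indicator (fun _ => lam P) x := by
          symm
          refine Finset.sum_subset ?_ ?_
          · rw [hs]
            intro P hP
            rw [Finset.mem_filter] at hP ⊢
            exact ⟨hP.1, hP.2.1⟩
          · intro P hPF hPs
            rw [Finset.mem_filter] at hPF
            have h2 : K P = ∞ ∧ σ (cube n P) ≠ 0 := by
              by_contra hcon
              apply hPs
              rw [hs, Finset.mem_filter]
              refine ⟨hPF.1, hPF.2, ?_⟩
              push_neg at hcon
              by_cases hKP : K P = ∞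
              · exact Or.inr (hcon hKP)
              · exact Or.inl hKP
            have hPbad : P ∈ sbad := by
              rw [hsbad, Finset.mem_filter]
              exact ⟨hPF.1, hPF.2, h2.1, h2.2⟩
            have hxP : x ∉ cube n P := fun hxc => hx (by rw [hN]; exact Set.mem_biUnion hPbad hxc)
            exact Set.indicator_of_notMem hxP _
      _ = coreS s (cube n) lam x := rfl
  have hae : (fun x => G x ^ q) =ᵐ[ω] (fun x => coreS s (cube n) lam x ^ q) := by
    refine MeasureTheory.ae_iff.mpr (measure_mono_null ?_ hNnull)
    intro x hxmem
    simp only [Set.mem_setOf_eq] at hxmem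
    by_contra hxN
    exact hxmem (by rw [hGeq x hxN])
  have hIle : I ≤ ∫⁻ x, coreS s (cube n) lam x ^ q ∂ω := by
    rw [hI]
    exact le_trans (setLIntegral_le_lintegral F _) (le_of_eq (lintegral_congr_ae hae))
  have hcore := core_main (s := s) (Q := cube n) (lam := lam) (ω := ω) hQm hnest hlamfin hωfin hq
  have hJform : J = ∑' P : ℤ × (Fin n → ℤ), ∫⁻ y in F, (cube n P).indicator
      (fun _ => K P * ω (cube n P) *
        ((∑' P' : ℤ × (Fin n → ℤ), if cube n P' ⊆ cube n P then
          K P' * ω (cube n P') * σ (cube n P') else 0) / ω (cube n P)) ^ (q - 1)) y ∂σ := by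
    rw [hJ]
    simp only [wolffPot]
    exact lintegral_tsum fun P => (measurable_const.indicator (hQm P)).aemeasurable
  have hWJ : (∑ c' ∈ s, lam c' * ω (cube n c') *
      (coreA s (cube n) lam ω c' / ω (cube n c')) ^ (q - 1)) ≤ J := by
    rw [hJform]
    refine le_trans (Finset.sum_le_sum ?_) (ENNReal.sum_le_tsum s)
    intro P hP
    rw [hs, Finset.mem_filter] at hP
    have hPF : cube n P ⊆ F := hP.2.1
    have hIeval : ∫⁻ y in F, (cube n P).indicator
        (fun _ => K P * ω (cube n P) *
          ((∑' P' : ℤ × (Fin n → ℤ), if cube n P' ⊆ cube n P then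
            K P' * ω (cube n P') * σ (cube n P') else 0) / ω (cube n P)) ^ (q - 1)) y ∂σ =
        K P * ω (cube n P) *
          ((∑' P' : ℤ × (Fin n → ℤ), if cube n P' ⊆ cube n P then
            K P' * ω (cube n P') * σ (cube n P') else 0) / ω (cube n P)) ^ (q - 1) *
          σ (cube n P) := by
      rw [lintegral_indicator (hQm P), Measure.restrict_restrict (hQm P),
        Set.inter_eq_self_of_subset_left hPF, setLIntegral_const]
    rw [hIeval]
    have hAle : coreA s (cube n) lam ω P ≤
        ∑' P' : ℤ × (Fin n → ℤ), if cube n P' ⊆ cube n P then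
          K P' * ω (cube n P') * σ (cube n P') else 0 := by
      have he : coreA s (cube n) lam ω P = ∑ j ∈ s.filter (fun j => cube n j ⊆ cube n P),
          (if cube n j ⊆ cube n P then K j * ω (cube n j) * σ (cube n j) else 0) := by
        rw [coreA]
        refine Finset.sum_congr rfl fun j hj => ?_
        rw [if_pos (Finset.mem_filter.mp hj).2, hlamdef]
        ring
      rw [he]
      exact ENNReal.sum_le_tsum _
    calc lam P * ω (cube n P) * (coreA s (cube n) lam ω P / ω (cube n P)) ^ (q - 1)
        = K P * ω (cube n P) *
            (coreA s (cube n) lam ω P / ω (cube n P)) ^ (q - 1) * σ (cube n P) := by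
          rw [hlamdef]
          ring
      _ ≤ K P * ω (cube n P) *
            ((∑' P' : ℤ × (Fin n → ℤ), if cube n P' ⊆ cube n P then
              K P' * ω (cube n P') * σ (cube n P') else 0) / ω (cube n P)) ^ (q - 1) *
            σ (cube n P) := by
          refine mul_le_mul_left (mul_le_mul_right ?_ _) _
          exact ENNReal.rpow_le_rpow (ENNReal.div_le_div_right hAle _) (by linarith)
  have hIJ : I ≤ c * J := by
    refine le_trans hIle (le_trans hcore ?_)
    rw [hc]
    exact mul_le_mul_right hWJ _
  have hMB : ∀ x ∈ E, J / σ F ≤ dyadicMaximal σ (wolffPot n K ω σ q) x := by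
    intro x hxE
    have hxF : x ∈ dyadicCube n iF kF := hFeq ▸ hEsub hxE
    rw [dyadicMaximal]
    refine le_trans ?_ (le_iSup_of_le iF (le_iSup_of_le kF (le_iSup_of_le hxF le_rfl)))
    rw [← hFeq, hJ]
  have hRIlow : (J / σ F) ^ (r/q) * σ E ≤ RI := by
    have h1 : ∀ x, E.indicator (fun _ => (J / σ F) ^ (r/q)) x ≤
        E.indicator (fun y => dyadicMaximal σ (wolffPot n K ω σ q) y ^ (r/q)) x := by
      intro x
      by_cases hx : x ∈ E
      · rw [Set.indicator_of_mem hx, Set.indicator_of_mem hx]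
        exact ENNReal.rpow_le_rpow (hMB x hx) (le_of_lt hrq0)
      · rw [Set.indicator_of_notMem hx, Set.indicator_of_notMem hx]
    calc (J / σ F) ^ (r/q) * σ E
        = ∫⁻ x, E.indicator (fun _ => (J / σ F) ^ (r/q)) x ∂σ := by
          rw [lintegral_indicator hEmeas, setLIntegral_const]
      _ ≤ ∫⁻ x, E.indicator (fun y => dyadicMaximal σ (wolffPot n K ω σ q) y ^ (r/q)) x ∂σ :=
          lintegral_mono h1
      _ = RI := by rw [lintegral_indicator hEmeas, ← hRI]
  have hkey : σ F ^ (-(r/p)) = σ F ^ (-(r/q)) * σ F := by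
    nth_rewrite 3 [← ENNReal.rpow_one (σ F)]
    rw [← ENNReal.rpow_add _ _ hσF0 hσF]
    congr 1
    linarith [hrexp]
  calc ((σ F ^ (1/p))⁻¹ * I ^ (1/q)) ^ r
      = ((σ F ^ (1/p))⁻¹) ^ r * (I ^ (1/q)) ^ r :=
        ENNReal.mul_rpow_of_nonneg _ _ (le_of_lt hr0)
    _ = σ F ^ (-(r/p)) * I ^ (r/q) := by
        rw [← ENNReal.rpow_neg, ← ENNReal.rpow_mul, ← ENNReal.rpow_mul]
        congr 1
        · congr 1
          ring
        · congr 1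
          ring
    _ ≤ σ F ^ (-(r/p)) * (c * J) ^ (r/q) :=
        mul_le_mul_right (ENNReal.rpow_le_rpow hIJ (le_of_lt hrq0)) _
    _ = c ^ (r/q) * (J ^ (r/q) * σ F ^ (-(r/p))) := by
        rw [ENNReal.mul_rpow_of_nonneg _ _ (le_of_lt hrq0)]
        ring
    _ = c ^ (r/q) * ((J / σ F) ^ (r/q) * σ F) := by
        congr 1
        rw [ENNReal.div_rpow_of_nonneg _ _ (le_of_lt hrq0), ENNReal.div_eq_inv_mul,
          ← ENNReal.rpow_neg, hkey]
        ring
    _ ≤ c ^ (r/q) * ((J / σ F) ^ (r/q) * (2 * σ E)) :=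
        mul_le_mul_right (mul_le_mul_right hcar _) _
    _ = 2 * c ^ (r/q) * ((J / σ F) ^ (r/q) * σ E) := by ring
    _ ≤ 2 * c ^ (r/q) * RI := mul_le_mul_right hRIlow _


end
end
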